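/- arXiv:2109.09200 — 3 statements merged into one kernel-verified Lean document; each statement's English description precedes it below -/
import Mathlib

section
/- Let G be a graph and let t, t' be exchangeable tubes of G which are not a maximal exchangeable pair; say |t \ t'| ≥ 2, and let w ∈ t \ t' be a non-disconnecting vertex of t \ t' different from the unique neighbor v of t' in t \ t'. Then, setting s := t \ {w} and s' := (t ∪ t') \ {w}, the pairs {s, t'} and {t, s'} are exchangeable, and the normal vectors satisfy n(s, t') + n(t, s') = n(t, t'), where n(a,b) := f_a + f_b − f_{a∪b} − Σ_{c ∈ cc(a ∩ b)} f_c in the free vector space ℝ^{T(G)} with canonical basis (f_t). -/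
open scoped Classical

variable {V : Type*} [Fintype V] [DecidableEq V]

/-- A tube of `G`: a nonempty vertex subset inducing a connected subgraph. -/
def IsTube (G : SimpleGraph V) (t : Finset V) : Prop :=
  t.Nonempty ∧ (G.induce (t : Set V)).Connected

/-- The set of all tubes of `G`. -/
noncomputable def tubes (G : SimpleGraph V) : Finset (Finset V) :=
  Finset.univ.powerset.filter (fun t => IsTube G t)

/-- Compatibility of tubes: nested, or disjoint with non-tube union. -/
def Compatible (G : SimpleGraph V) (t t' : Finset V) : Prop :=
  t ⊆ t' ∨ t' ⊆ t ∨ (t ∩ t' = ∅ ∧ ¬ IsTube G (t ∪ t'))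

/-- A tubing on `G`: pairwise compatible tubes containing all connected components
(that is, all inclusion-maximal tubes). -/
def IsTubing (G : SimpleGraph V) (T : Finset (Finset V)) : Prop :=
  (∀ t ∈ T, IsTube G t) ∧
  (∀ t ∈ T, ∀ t' ∈ T, Compatible G t t') ∧
  (∀ K : Finset V, IsTube G K → (∀ t : Finset V, IsTube G t → K ⊆ t → K = t) → K ∈ T)

/-- A maximal tubing on `G`. -/
def IsMaxTubing (G : SimpleGraph V) (T : Finset (Finset V)) : Prop :=
  IsTubing G T ∧ ∀ T', IsTubing G T' → T ⊆ T' → T = T'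

/-- Two tubes are exchangeable if two maximal tubings differ exactly by them. -/
def ExchangeableT (G : SimpleGraph V) (t t' : Finset V) : Prop :=
  t ≠ t' ∧ ∃ T T', IsMaxTubing G T ∧ IsMaxTubing G T' ∧ t ∈ T ∧ t' ∈ T' ∧
    T.erase t = T'.erase t'

/-- `u` is a neighbor of the vertex set `s`: `u ∉ s` and `u` is adjacent to some vertex of `s`. -/
def NbrOf (G : SimpleGraph V) (s : Finset V) (u : V) : Prop :=
  u ∉ s ∧ ∃ x ∈ s, G.Adj u x

/-- Connected components of the induced subgraph on `U`:
inclusion-maximal tubes contained in `U`. -/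
noncomputable def gccSet (G : SimpleGraph V) (U : Finset V) : Finset (Finset V) :=
  (tubes G).filter (fun K => K ⊆ U ∧ ∀ C : Finset V, IsTube G C → C ⊆ U → K ⊆ C → K = C)

/-- Characteristic vector of a subset of `V` in `ℝ^V`. -/
def chi (S : Finset V) : V → ℝ := fun v => if v ∈ S then 1 else 0

/-- `w` is a non-disconnecting vertex of the set `s`. -/
def NonDisc (G : SimpleGraph V) (s : Finset V) (w : V) : Prop :=
  w ∈ s ∧ (s.erase w = ∅ ∨ IsTube G (s.erase w))

/-- Canonical basis vector `f_s` of `ℝ^{T(G)}`, seen in `Finset V → ℝ`. -/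
noncomputable def fvec (s : Finset V) : Finset V → ℝ := fun r => if r = s then 1 else 0

/-- The normal vector `n(a, b) = f_a + f_b - f_{a ∪ b} - ∑_{c ∈ cc(a ∩ b)} f_c`. -/
noncomputable def nvec (G : SimpleGraph V) (a b : Finset V) : Finset V → ℝ :=
  fvec a + fvec b - fvec (a ∪ b) - ∑ c ∈ gccSet G (a ∩ b), fvec c

set_option linter.unusedSectionVars false
set_option linter.unnecessarySimpa false
set_option maxHeartbeats 1000000
set_option linter.unreachableTactic false
set_option linter.unusedTactic false

/-- One-step relation inside a finite vertex set. -/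
def relIn (G : SimpleGraph V) (P : Finset V) (a b : V) : Prop :=
  a ∈ P ∧ b ∈ P ∧ G.Adj a b

/-- Reachability inside a finite vertex set. -/
def Reach (G : SimpleGraph V) (P : Finset V) : V → V → Prop :=
  Relation.ReflTransGen (relIn G P)

/-- Connectivity predicate. -/
def Conn (G : SimpleGraph V) (P : Finset V) : Prop :=
  ∀ x ∈ P, ∀ y ∈ P, Reach G P x y

lemma relIn_symm (G : SimpleGraph V) (P : Finset V) : Symmetric (relIn G P) :=
  fun _ _ h => ⟨h.2.1, h.1, h.2.2.symm⟩

lemma Reach.symm {G : SimpleGraph V} {P : Finset V} {x y : V} (h : Reach G P x y) :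
    Reach G P y x := by
  unfold Reach at h ⊢
  induction h with
  | refl => exact Relation.ReflTransGen.refl
  | tail _ hr ih => exact Relation.ReflTransGen.head (relIn_symm G P hr) ih

lemma Reach.mono {G : SimpleGraph V} {P Q : Finset V} (hPQ : P ⊆ Q) {x y : V}
    (h : Reach G P x y) : Reach G Q x y :=
  Relation.ReflTransGen.mono (r := relIn G P) (p := relIn G Q)
    (fun _ _ hr => ⟨hPQ hr.1, hPQ hr.2.1, hr.2.2⟩) _ _ h

lemma Reach.mem_right {G : SimpleGraph V} {P : Finset V} {x y : V} (hx : x ∈ P)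
    (h : Reach G P x y) : y ∈ P := by
  induction h with
  | refl => exact hx
  | tail _ hr _ => exact hr.2.1

lemma tube_iff (G : SimpleGraph V) (s : Finset V) :
    IsTube G s ↔ s.Nonempty ∧ Conn G s := by
  constructor
  · rintro ⟨hne, hconn⟩
    refine ⟨hne, fun x hx y hy => ?_⟩
    have hr := hconn.preconnected ⟨x, by simpa using hx⟩ ⟨y, by simpa using hy⟩
    obtain ⟨wlk⟩ := hr
    clear hconn
    have key : ∀ (A B : (s : Set V)) (_w : (G.induce (s : Set V)).Walk A B),
        Reach G s A.1 B.1 := by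
      intro A B wk
      induction wk with
      | nil => exact Relation.ReflTransGen.refl
      | @cons a b c hab p ih =>
        have : relIn G s a.1 b.1 := ⟨by simpa using a.2, by simpa using b.2, by simpa using hab⟩
        exact Relation.ReflTransGen.head this ih
    exact key _ _ wlk
  · rintro ⟨hne, hconn⟩
    refine ⟨hne, ?_⟩
    rw [SimpleGraph.connected_iff]
    refine ⟨fun a b => ?_, by obtain ⟨x, hx⟩ := hne; exact ⟨⟨x, by simpa using hx⟩⟩⟩
    have h := hconn a.1 (by simpa using a.2) b.1 (by simpa using b.2)
    clear hconn
    obtain ⟨x, hx⟩ := a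
    obtain ⟨y, hy⟩ := b
    simp only at h
    induction h with
    | refl => rfl
    | @tail b c hxb hbc ih =>
      have hbmem : b ∈ s := hbc.1
      have := ih (by simpa using hbmem)
      refine this.trans ?_
      exact SimpleGraph.Adj.reachable (by simpa using hbc.2.2)

lemma Conn.mono_reach {G : SimpleGraph V} {s P : Finset V} (hs : Conn G s) (hsP : s ⊆ P)
    {x y : V} (hx : x ∈ s) (hy : y ∈ s) : Reach G P x y :=
  (hs x hx y hy).mono hsP

/-- Union of two connected sets sharing a vertex. -/
lemma conn_union_of_meet {G : SimpleGraph V} {s u : Finset V} (hs : Conn G s) (hu : Conn G u)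
    {z : V} (hzs : z ∈ s) (hzu : z ∈ u) : Conn G (s ∪ u) := by
  intro x hx y hy
  have hz : ∀ a ∈ s ∪ u, Reach G (s ∪ u) a z := by
    intro a ha
    rcases Finset.mem_union.1 ha with h | h
    · exact (hs a h z hzs).mono Finset.subset_union_left
    · exact (hu a h z hzu).mono Finset.subset_union_right
  exact (hz x hx).trans (hz y hy).symm

/-- Union of two connected sets joined by an edge. -/
lemma conn_union_of_adj {G : SimpleGraph V} {s u : Finset V} (hs : Conn G s) (hu : Conn G u)
    {a b : V} (ha : a ∈ s) (hb : b ∈ u) (hab : G.Adj a b) : Conn G (s ∪ u) := by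
  intro x hx y hy
  have hstep : Reach G (s ∪ u) a b :=
    Relation.ReflTransGen.single ⟨Finset.mem_union_left _ ha, Finset.mem_union_right _ hb, hab⟩
  have hz : ∀ c ∈ s ∪ u, Reach G (s ∪ u) c a := by
    intro c hc
    rcases Finset.mem_union.1 hc with h | h
    · exact (hs c h a ha).mono Finset.subset_union_left
    · exact ((hu c h b hb).mono Finset.subset_union_right).trans hstep.symm
  exact (hz x hx).trans (hz y hy).symm

lemma isTube_union_of_meet {G : SimpleGraph V} {s u : Finset V} (hs : IsTube G s)
    (hu : IsTube G u) (h : (s ∩ u).Nonempty) : IsTube G (s ∪ u) := by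
  rw [tube_iff] at hs hu ⊢
  obtain ⟨z, hz⟩ := h
  have := Finset.mem_inter.1 hz
  exact ⟨hs.1.mono Finset.subset_union_left, conn_union_of_meet hs.2 hu.2 this.1 this.2⟩

lemma isTube_union_of_adj {G : SimpleGraph V} {s u : Finset V} (hs : IsTube G s)
    (hu : IsTube G u) {a b : V} (ha : a ∈ s) (hb : b ∈ u) (hab : G.Adj a b) :
    IsTube G (s ∪ u) := by
  rw [tube_iff] at hs hu ⊢
  exact ⟨hs.1.mono Finset.subset_union_left, conn_union_of_adj hs.2 hu.2 ha hb hab⟩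

/-- If `s` and `u` are disjoint with no edge between them, their union is not a tube. -/
lemma not_tube_of_no_edge {G : SimpleGraph V} {s u : Finset V} (hs : s.Nonempty)
    (hu : u.Nonempty) (hdisj : s ∩ u = ∅)
    (hedge : ∀ a ∈ s, ∀ b ∈ u, ¬ G.Adj a b) : ¬ IsTube G (s ∪ u) := by
  rw [tube_iff]
  rintro ⟨-, hconn⟩
  obtain ⟨x, hx⟩ := hs
  obtain ⟨y, hy⟩ := hu
  have hreach := hconn x (Finset.mem_union_left _ hx) y (Finset.mem_union_right _ hy)
  have hstay : ∀ z, Reach G (s ∪ u) x z → z ∈ s := by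
    intro z hz
    induction hz with
    | refl => exact hx
    | @tail b c _ hr ih =>
      rcases Finset.mem_union.1 hr.2.1 with h | h
      · exact h
      · exact absurd hr.2.2 (hedge b ih c h)
  have := hstay y hreach
  have : y ∈ s ∩ u := Finset.mem_inter.2 ⟨this, hy⟩
  simp [hdisj] at this

/-- In a connected set, a proper nonempty subset has an outgoing edge. -/
lemma exists_crossing_edge {G : SimpleGraph V} {u s : Finset V} (hu : Conn G u)
    (hsu : s ⊆ u) (hs : s.Nonempty) (hd : (u \ s).Nonempty) :
    ∃ a ∈ s, ∃ b ∈ u \ s, G.Adj a b := by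
  by_contra hcon
  push_neg at hcon
  obtain ⟨x, hx⟩ := hs
  obtain ⟨y, hy⟩ := hd
  have hreach := hu x (hsu hx) y (Finset.mem_sdiff.1 hy).1
  have hstay : ∀ z, Reach G u x z → z ∈ s := by
    intro z hz
    induction hz with
    | refl => exact hx
    | @tail b c _ hr ih =>
      by_contra hc
      exact hcon b ih c (Finset.mem_sdiff.2 ⟨hr.2.1, hc⟩) hr.2.2
  exact (Finset.mem_sdiff.1 hy).2 (hstay y hreach)

/-- Connected component of `x` inside the vertex set `P`. -/
noncomputable def comp (G : SimpleGraph V) (P : Finset V) (x : V) : Finset V :=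
  P.filter (fun y => Reach G P x y)

lemma comp_subset {G : SimpleGraph V} {P : Finset V} {x : V} : comp G P x ⊆ P :=
  Finset.filter_subset _ _

lemma mem_comp_self {G : SimpleGraph V} {P : Finset V} {x : V} (hx : x ∈ P) :
    x ∈ comp G P x := Finset.mem_filter.2 ⟨hx, Relation.ReflTransGen.refl⟩

lemma mem_comp {G : SimpleGraph V} {P : Finset V} {x y : V} :
    y ∈ comp G P x ↔ y ∈ P ∧ Reach G P x y := Finset.mem_filter

lemma comp_conn {G : SimpleGraph V} {P : Finset V} {x : V} : Conn G (comp G P x) := by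
  have key : ∀ y, Reach G P x y → Reach G (comp G P x) x y := by
    intro y hy
    induction hy with
    | refl => exact Relation.ReflTransGen.refl
    | @tail b c hxb hr ih =>
      have hb : b ∈ comp G P x := mem_comp.2 ⟨hr.1, hxb⟩
      have hc : c ∈ comp G P x := mem_comp.2 ⟨hr.2.1, hxb.tail hr⟩
      exact ih.tail ⟨hb, hc, hr.2.2⟩
  intro a ha b hb
  exact (key a (mem_comp.1 ha).2).symm.trans (key b (mem_comp.1 hb).2)

lemma comp_tube {G : SimpleGraph V} {P : Finset V} {x : V} (hx : x ∈ P) :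
    IsTube G (comp G P x) :=
  (tube_iff G _).2 ⟨⟨x, mem_comp_self hx⟩, comp_conn⟩

/-- A connected subset of `P` meeting a component is inside it. -/
lemma conn_subset_comp {G : SimpleGraph V} {P s : Finset V} {x : V} (hs : Conn G s)
    (hsP : s ⊆ P) {z : V} (hz : z ∈ s) (hzc : z ∈ comp G P x) : s ⊆ comp G P x := by
  intro y hy
  have : Reach G P z y := (hs z hz y hy).mono hsP
  exact mem_comp.2 ⟨hsP hy, (mem_comp.1 hzc).2.trans this⟩

/-- If `s ⊆ P` is connected, contains `x`, and has no edges to `P \ s`, then `comp P x = s`. -/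
lemma comp_eq_of_no_edge {G : SimpleGraph V} {P s : Finset V} {x : V} (hs : Conn G s)
    (hsP : s ⊆ P) (hx : x ∈ s)
    (hed : ∀ a ∈ s, ∀ b ∈ P \ s, ¬ G.Adj a b) : comp G P x = s := by
  apply Finset.Subset.antisymm
  · intro y hy
    have hr := (mem_comp.1 hy).2
    clear hy
    induction hr with
    | refl => exact hx
    | @tail b c _ hr ih =>
      by_contra hc
      exact hed b ih c (Finset.mem_sdiff.2 ⟨hr.2.1, hc⟩) hr.2.2
  · exact conn_subset_comp hs hsP hx (mem_comp_self (hsP hx))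

lemma comp_eq_self_of_conn {G : SimpleGraph V} {P : Finset V} {x : V} (hP : Conn G P)
    (hx : x ∈ P) : comp G P x = P :=
  comp_eq_of_no_edge hP (le_refl _) hx (by intro a _ b hb; simp at hb)

/-- Each component of `u.erase x` has an edge to `x` (when `u` is connected). -/
lemma comp_erase_adj {G : SimpleGraph V} {u : Finset V} (hu : Conn G u) {x z : V}
    (hx : x ∈ u) (hz : z ∈ u.erase x) :
    ∃ y ∈ comp G (u.erase x) z, G.Adj x y := by
  have hzu : z ∈ u := Finset.mem_of_mem_erase hz
  have hzx : z ≠ x := Finset.ne_of_mem_erase hz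
  have hr : Reach G u z x := hu z hzu x hx
  -- find the last step into x along a walk avoiding earlier x-visits
  have key : ∀ a, Reach G u a x → a ≠ x →
      ∃ y, G.Adj x y ∧ y ∈ u.erase x ∧ Reach G (u.erase x) a y := by
    intro a hax
    induction hax using Relation.ReflTransGen.head_induction_on with
    | refl => intro h; exact absurd rfl h
    | @head a b hab hbx ih =>
      intro hax
      by_cases hbxeq : b = x
      · subst hbxeq
        exact ⟨a, hab.2.2.symm, Finset.mem_erase.2 ⟨hax, hab.1⟩, Relation.ReflTransGen.refl⟩
      · obtain ⟨y, h1, h2, h3⟩ := ih hbxeq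
        refine ⟨y, h1, h2, Relation.ReflTransGen.head ?_ h3⟩
        exact ⟨Finset.mem_erase.2 ⟨hax, hab.1⟩, Finset.mem_erase.2 ⟨hbxeq, hab.2.1⟩, hab.2.2⟩
  obtain ⟨y, h1, h2, h3⟩ := key z hr hzx
  exact ⟨y, mem_comp.2 ⟨h2, h3.symm.symm⟩, h1⟩

/-- Removing a vertex whose neighborhood in `t` lies in a connected `s₀ ⊆ t.erase w`
keeps `t.erase w` connected. -/
lemma conn_erase_of_nbrs {G : SimpleGraph V} {t s₀ : Finset V} {w : V} (ht : Conn G t)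
    (hw : w ∈ t) (hs₀ : s₀ ⊆ t.erase w) (hs₀c : Conn G s₀) (hs₀ne : s₀.Nonempty)
    (hnb : ∀ y ∈ t, G.Adj w y → y ∈ s₀) : Conn G (t.erase w) := by
  obtain ⟨x₀, hx₀⟩ := hs₀ne
  have key : ∀ a, Reach G t a x₀ → a ≠ w → ∃ b ∈ s₀, Reach G (t.erase w) a b := by
    intro a har
    induction har using Relation.ReflTransGen.head_induction_on with
    | refl => intro _; exact ⟨x₀, hx₀, Relation.ReflTransGen.refl⟩
    | @head a c hac hcx ih =>
      intro haw
      by_cases has : a ∈ s₀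
      · exact ⟨a, has, Relation.ReflTransGen.refl⟩
      · have hcw : c ≠ w := by
          intro h; subst h
          exact has (hnb a hac.1 hac.2.2.symm)
        obtain ⟨b, hb, hrb⟩ := ih hcw
        refine ⟨b, hb, Relation.ReflTransGen.head ?_ hrb⟩
        exact ⟨Finset.mem_erase.2 ⟨haw, hac.1⟩, Finset.mem_erase.2 ⟨hcw, hac.2.1⟩, hac.2.2⟩
  intro x hx y hy
  obtain ⟨bx, hbx, hrx⟩ := key x (ht x (Finset.mem_of_mem_erase hx) x₀
    (Finset.mem_of_mem_erase (hs₀ hx₀))) (Finset.ne_of_mem_erase hx)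
  obtain ⟨by', hby, hry⟩ := key y (ht y (Finset.mem_of_mem_erase hy) x₀
    (Finset.mem_of_mem_erase (hs₀ hx₀))) (Finset.ne_of_mem_erase hy)
  exact (hrx.trans ((hs₀c bx hbx by' hby).mono hs₀)).trans hry.symm

/-- Prefix set of `x` for a rank function `ρ`. -/
noncomputable def pset (ρ : V → ℕ) (x : V) : Finset V :=
  Finset.univ.filter (fun y => ρ y ≤ ρ x)

lemma mem_pset {ρ : V → ℕ} {x y : V} : y ∈ pset ρ x ↔ ρ y ≤ ρ x := by
  simp [pset]

lemma mem_pset_self {ρ : V → ℕ} {x : V} : x ∈ pset ρ x := mem_pset.2 le_rfl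

/-- The tube at `x` determined by the rank function `ρ`. -/
noncomputable def tubeAt (G : SimpleGraph V) (ρ : V → ℕ) (x : V) : Finset V :=
  comp G (pset ρ x) x

noncomputable def rankTubing (G : SimpleGraph V) (ρ : V → ℕ) : Finset (Finset V) :=
  Finset.univ.image (tubeAt G ρ)

lemma mem_tubeAt_self {G : SimpleGraph V} {ρ : V → ℕ} {x : V} : x ∈ tubeAt G ρ x :=
  mem_comp_self mem_pset_self

lemma tubeAt_subset {G : SimpleGraph V} {ρ : V → ℕ} {x : V} : tubeAt G ρ x ⊆ pset ρ x :=
  comp_subset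

lemma tubeAt_tube {G : SimpleGraph V} {ρ : V → ℕ} (x : V) : IsTube G (tubeAt G ρ x) :=
  comp_tube mem_pset_self

lemma tubeAt_conn {G : SimpleGraph V} {ρ : V → ℕ} (x : V) : Conn G (tubeAt G ρ x) :=
  comp_conn

lemma tubeAt_injective {G : SimpleGraph V} {ρ : V → ℕ} (hρ : Function.Injective ρ) :
    Function.Injective (tubeAt G ρ) := by
  intro x y h
  have hx : x ∈ pset ρ y := by
    have : x ∈ tubeAt G ρ y := h ▸ mem_tubeAt_self
    exact tubeAt_subset this
  have hy : y ∈ pset ρ x := by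
    have : y ∈ tubeAt G ρ x := h.symm ▸ mem_tubeAt_self
    exact tubeAt_subset this
  exact hρ (le_antisymm (mem_pset.1 hx) (mem_pset.1 hy))

lemma no_edge_out_of_tubeAt {G : SimpleGraph V} {ρ : V → ℕ} {x a b : V}
    (ha : a ∈ tubeAt G ρ x) (hb : b ∈ pset ρ x) (hab : G.Adj a b) : b ∈ tubeAt G ρ x :=
  mem_comp.2 ⟨hb, (mem_comp.1 ha).2.tail ⟨(mem_comp.1 ha).1, hb, hab⟩⟩

lemma compatible_symm {G : SimpleGraph V} {a b : Finset V} (h : Compatible G a b) :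
    Compatible G b a := by
  rcases h with h | h | ⟨h1, h2⟩
  · exact Or.inr (Or.inl h)
  · exact Or.inl h
  · exact Or.inr (Or.inr ⟨by rwa [Finset.inter_comm], by rwa [Finset.union_comm]⟩)

lemma rankTubing_compatible_aux {G : SimpleGraph V} {ρ : V → ℕ} {x y : V}
    (hle : ρ x ≤ ρ y) : Compatible G (tubeAt G ρ x) (tubeAt G ρ y) := by
  have hPle : pset ρ x ⊆ pset ρ y := fun z hz => mem_pset.2 ((mem_pset.1 hz).trans hle)
  by_cases hmeet : (tubeAt G ρ x ∩ tubeAt G ρ y).Nonempty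
  · obtain ⟨z, hz⟩ := hmeet
    have hz' := Finset.mem_inter.1 hz
    exact Or.inl (conn_subset_comp (tubeAt_conn x) (tubeAt_subset.trans hPle) hz'.1 hz'.2)
  · refine Or.inr (Or.inr ⟨Finset.not_nonempty_iff_eq_empty.1 hmeet, ?_⟩)
    refine not_tube_of_no_edge ⟨x, mem_tubeAt_self⟩ ⟨y, mem_tubeAt_self⟩
      (Finset.not_nonempty_iff_eq_empty.1 hmeet) ?_
    intro a ha b hb hab
    have : a ∈ tubeAt G ρ y :=
      no_edge_out_of_tubeAt hb (hPle (tubeAt_subset ha)) hab.symm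
    exact hmeet ⟨a, Finset.mem_inter.2 ⟨ha, this⟩⟩

lemma rankTubing_compatible {G : SimpleGraph V} {ρ : V → ℕ} (x y : V) :
    Compatible G (tubeAt G ρ x) (tubeAt G ρ y) := by
  rcases le_total (ρ x) (ρ y) with hle | hle
  · exact rankTubing_compatible_aux hle
  · exact compatible_symm (rankTubing_compatible_aux hle)

lemma rankTubing_isTubing (G : SimpleGraph V) (ρ : V → ℕ) : IsTubing G (rankTubing G ρ) := by
  refine ⟨?_, ?_, ?_⟩
  · intro u hu
    obtain ⟨x, -, rfl⟩ := Finset.mem_image.1 hu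
    exact tubeAt_tube x
  · intro u hu u' hu'
    obtain ⟨x, -, rfl⟩ := Finset.mem_image.1 hu
    obtain ⟨y, -, rfl⟩ := Finset.mem_image.1 hu'
    exact rankTubing_compatible x y
  · intro K hK hKmax
    obtain ⟨hKne, hKc⟩ := (tube_iff G K).1 hK
    obtain ⟨x, hxK, hxmax⟩ := Finset.exists_max_image K ρ hKne
    have hKP : K ⊆ pset ρ x := fun y hy => mem_pset.2 (hxmax y hy)
    have hKsub : K ⊆ tubeAt G ρ x :=
      conn_subset_comp hKc hKP hxK (mem_comp_self mem_pset_self)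
    have : K = tubeAt G ρ x := hKmax _ (tubeAt_tube x) hKsub
    rw [this]
    exact Finset.mem_image.2 ⟨x, Finset.mem_univ x, rfl⟩

lemma rankTubing_mem_of_tubing {G : SimpleGraph V} {ρ : V → ℕ}
    (hρ : Function.Injective ρ) {T₂ : Finset (Finset V)}
    (hT₂ : IsTubing G T₂) (hsub : rankTubing G ρ ⊆ T₂) {u : Finset V} (hu : u ∈ T₂) :
    u ∈ rankTubing G ρ := by
  have hutube := hT₂.1 u hu
  obtain ⟨hune, huc⟩ := (tube_iff G u).1 hutube
  obtain ⟨x, hxu, hxmax⟩ := Finset.exists_max_image u ρ hune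
  have huP : u ⊆ pset ρ x := fun y hy => mem_pset.2 (hxmax y hy)
  set c := tubeAt G ρ x with hc
  have hcmem : c ∈ rankTubing G ρ := Finset.mem_image.2 ⟨x, Finset.mem_univ x, rfl⟩
  have husub : u ⊆ c := conn_subset_comp huc huP hxu (mem_comp_self mem_pset_self)
  have : u = c := by
    by_contra hne
    obtain ⟨z, hzc, hzu⟩ : ∃ z, z ∈ c ∧ z ∉ u := by
      by_contra hcon
      push_neg at hcon
      exact hne (Finset.Subset.antisymm husub hcon)
    have hzx : z ≠ x := fun h => hzu (h ▸ hxu)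
    have hzce : z ∈ c.erase x := Finset.mem_erase.2 ⟨hzx, hzc⟩
    -- the component K of z in c.erase x is itself a rank tube
    set K := comp G (c.erase x) z with hK
    have hKne : K.Nonempty := ⟨z, mem_comp_self hzce⟩
    obtain ⟨xK, hxKK, hxKmax⟩ := Finset.exists_max_image K ρ hKne
    have hKsubc : K ⊆ c.erase x := comp_subset
    have hxKc : xK ∈ c := Finset.mem_of_mem_erase (hKsubc hxKK)
    have hxKx : xK ≠ x := Finset.ne_of_mem_erase (hKsubc hxKK)
    have hρlt : ρ xK < ρ x := by
      have : ρ xK ≤ ρ x := mem_pset.1 (tubeAt_subset hxKc)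
      rcases lt_or_eq_of_le this with h | h
      · exact h
      · exact absurd (hρ h) hxKx
    have hKrank : K = tubeAt G ρ xK := by
      apply Finset.Subset.antisymm
      · refine conn_subset_comp comp_conn (fun y hy => mem_pset.2 (hxKmax y hy)) hxKK
          (mem_comp_self mem_pset_self)
      · -- tubeAt xK ⊆ K
        have h1 : tubeAt G ρ xK ⊆ c := by
          refine conn_subset_comp (tubeAt_conn xK) ?_ mem_tubeAt_self hxKc
          intro y hy
          exact mem_pset.2 ((mem_pset.1 (tubeAt_subset hy)).trans (le_of_lt hρlt))
        have h2 : tubeAt G ρ xK ⊆ c.erase x := by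
          intro y hy
          refine Finset.mem_erase.2 ⟨?_, h1 hy⟩
          intro hyx; subst hyx
          exact absurd (mem_pset.1 (tubeAt_subset hy)) (not_le.2 hρlt)
        exact conn_subset_comp (tubeAt_conn xK) h2 mem_tubeAt_self hxKK
    have hKmem : K ∈ T₂ := hsub (hKrank ▸ Finset.mem_image.2 ⟨xK, Finset.mem_univ xK, rfl⟩)
    -- u and K are incompatible: contradiction
    have hcomp := hT₂.2.1 u hu K hKmem
    have hxnotK : x ∉ K := fun h => (Finset.mem_erase.1 (hKsubc h)).1 rfl
    have hzK : z ∈ K := mem_comp_self hzce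
    -- edge from x into K
    have hcconn : Conn G c := tubeAt_conn x
    obtain ⟨y, hyK, hxy⟩ := comp_erase_adj hcconn (mem_tubeAt_self) hzce
    rcases hcomp with h | h | ⟨hdisj, hnt⟩
    · exact hxnotK (h hxu)
    · exact hzu (h hzK)
    · refine hnt (isTube_union_of_adj hutube ((tube_iff G K).2 ⟨hKne, comp_conn⟩) hxu hyK hxy)
  rw [this]; exact hcmem

lemma rankTubing_isMaxTubing (G : SimpleGraph V) {ρ : V → ℕ} (hρ : Function.Injective ρ) :
    IsMaxTubing G (rankTubing G ρ) := by
  refine ⟨rankTubing_isTubing G ρ, fun T₂ hT₂ hsub => ?_⟩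
  apply Finset.Subset.antisymm hsub
  intro u hu
  exact rankTubing_mem_of_tubing hρ hT₂ hsub hu

section Exchange

variable {G : SimpleGraph V}

/-- The rank function used for the exchange construction. -/
noncomputable def exRank (a b : Finset V) (va vb : V) (flip : Bool) : V → ℕ :=
  fun x =>
    let n := Fintype.card V
    let e : V → ℕ := fun z => ((Fintype.equivFin V) z : ℕ)
    if x = va then (if flip then n + 1 else n)
    else if x = vb then (if flip then n else n + 1)
    else if x ∈ a ∪ b then e x else 2 * n + 2 + e x

lemma exRank_injective {a b : Finset V} {va vb : V} (hvavb : va ≠ vb) (fl : Bool) :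
    Function.Injective (exRank a b va vb fl) := by
  intro x y h
  have he : ∀ z : V, ((Fintype.equivFin V) z : ℕ) < Fintype.card V := fun z =>
    ((Fintype.equivFin V) z).isLt
  have hinj : ∀ z z' : V, ((Fintype.equivFin V) z : ℕ) = ((Fintype.equivFin V) z' : ℕ) →
      z = z' := by
    intro z z' hzz
    exact (Fintype.equivFin V).injective (Fin.ext hzz)
  unfold exRank at h
  simp only at h
  have hex := he x
  have hey := he y
  split_ifs at h with h1 h2 h3 h4 h5 h6 h7 h8 h9 <;>
    first
      | (subst h1; subst h2; rfl)
      | (try subst h1; try subst h2; try subst h3; try subst h4; try subst h5;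
         try subst h6; try subst h7; try subst h8; try subst h9;
         first
           | rfl
           | (exact absurd rfl hvavb)
           | (exact absurd rfl hvavb.symm)
           | (cases fl <;> simp only [Bool.false_eq_true, if_true, if_false] at h <;> omega)
           | (exact hinj x y h)
           | (exact hinj x y (by omega))
           | (subst_vars; rfl)
           | omega)

lemma exRank_apply_va {a b : Finset V} {va vb : V} (hvavb : va ≠ vb) (fl : Bool) :
    exRank a b va vb fl va = if fl then Fintype.card V + 1 else Fintype.card V := by
  simp [exRank]

lemma exRank_apply_vb {a b : Finset V} {va vb : V} (hvavb : va ≠ vb) (fl : Bool) :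
    exRank a b va vb fl vb = if fl then Fintype.card V else Fintype.card V + 1 := by
  simp [exRank, Ne.symm hvavb]

lemma exRank_apply_mem {a b : Finset V} {va vb : V} {x : V} (h1 : x ≠ va) (h2 : x ≠ vb)
    (h3 : x ∈ a ∪ b) (fl : Bool) :
    exRank a b va vb fl x = ((Fintype.equivFin V) x : ℕ) := by
  simp [exRank, h1, h2, h3]

lemma exRank_apply_not_mem {a b : Finset V} {va vb : V} {x : V} (h1 : x ≠ va) (h2 : x ≠ vb)
    (h3 : x ∉ a ∪ b) (fl : Bool) :
    exRank a b va vb fl x = 2 * Fintype.card V + 2 + ((Fintype.equivFin V) x : ℕ) := by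
  simp [exRank, h1, h2, h3]

lemma exRank_le_iff {a b : Finset V} {va vb : V} (hvavb : va ≠ vb) (fl : Bool) (c : ℕ)
    (hc : c = Fintype.card V ∨ c = Fintype.card V + 1) (y : V) :
    exRank a b va vb fl y ≤ c ↔ (y = va ∨ y = vb ∨ y ∈ a ∪ b) ∧
      (exRank a b va vb fl y ≤ c) := by
  constructor
  · intro h
    refine ⟨?_, h⟩
    by_contra hcon
    push_neg at hcon
    rw [exRank_apply_not_mem hcon.1 hcon.2.1 hcon.2.2] at h
    omega
  · exact fun h => h.2

lemma exRank_pset_va {a b : Finset V} {va vb : V} (hva : va ∈ a ∪ b) (hvb : vb ∈ a ∪ b)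
    (hvavb : va ≠ vb) :
    pset (exRank a b va vb false) va = (a ∪ b).erase vb := by
  have he : ∀ z : V, ((Fintype.equivFin V) z : ℕ) < Fintype.card V := fun z =>
    ((Fintype.equivFin V) z).isLt
  ext y
  rw [mem_pset, exRank_apply_va hvavb, Finset.mem_erase]
  simp only [Bool.false_eq_true, if_false]
  by_cases h1 : y = va
  · subst h1
    rw [exRank_apply_va hvavb]
    simp [hva, hvavb]
  · by_cases h2 : y = vb
    · subst h2
      rw [exRank_apply_vb hvavb]
      simp only [Bool.false_eq_true, if_false, ne_eq, not_true_eq_false, false_and, iff_false]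
      omega
    · by_cases h3 : y ∈ a ∪ b
      · rw [exRank_apply_mem h1 h2 h3]
        have := he y
        simp only [ne_eq, h2, not_false_eq_true, h3, and_true, true_and, iff_true]
        omega
      · rw [exRank_apply_not_mem h1 h2 h3]
        have := he y
        simp only [ne_eq, h3, and_false, iff_false]
        omega

lemma exRank_pset_vb {a b : Finset V} {va vb : V} (hva : va ∈ a ∪ b) (hvb : vb ∈ a ∪ b)
    (hvavb : va ≠ vb) :
    pset (exRank a b va vb false) vb = a ∪ b := by
  have he : ∀ z : V, ((Fintype.equivFin V) z : ℕ) < Fintype.card V := fun z =>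
    ((Fintype.equivFin V) z).isLt
  ext y
  rw [mem_pset, exRank_apply_vb hvavb]
  simp only [Bool.false_eq_true, if_false]
  by_cases h1 : y = va
  · subst h1
    rw [exRank_apply_va hvavb]
    simp only [Bool.false_eq_true, if_false, hva, iff_true]
    omega
  · by_cases h2 : y = vb
    · subst h2
      rw [exRank_apply_vb hvavb]
      simp [hvb]
    · by_cases h3 : y ∈ a ∪ b
      · rw [exRank_apply_mem h1 h2 h3]
        have := he y
        simp only [h3, iff_true]
        omega
      · rw [exRank_apply_not_mem h1 h2 h3]
        have := he y
        simp only [h3, iff_false]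
        omega

/-- Swapping the two middle values gives the same rank function with roles exchanged. -/
lemma exRank_flip_eq {a b : Finset V} {va vb : V} (hvavb : va ≠ vb) :
    exRank a b va vb true = exRank b a vb va false := by
  funext x
  by_cases h1 : x = va
  · subst h1
    rw [exRank_apply_va hvavb, exRank_apply_vb (Ne.symm hvavb)]
    simp
  · by_cases h2 : x = vb
    · subst h2
      rw [exRank_apply_vb hvavb, exRank_apply_va (Ne.symm hvavb)]
      simp
    · by_cases h3 : x ∈ a ∪ b
      · rw [exRank_apply_mem h1 h2 h3, exRank_apply_mem h2 h1 (by rwa [Finset.union_comm])]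
      · rw [exRank_apply_not_mem h1 h2 h3,
          exRank_apply_not_mem h2 h1 (by rwa [Finset.union_comm])]

lemma exRank_pset_other {a b : Finset V} {va vb : V} (hvavb : va ≠ vb) {x : V}
    (hxa : x ≠ va) (hxb : x ≠ vb) :
    pset (exRank a b va vb false) x = pset (exRank a b va vb true) x := by
  have he : ∀ z : V, ((Fintype.equivFin V) z : ℕ) < Fintype.card V := fun z =>
    ((Fintype.equivFin V) z).isLt
  ext y
  rw [mem_pset, mem_pset]
  by_cases h3 : x ∈ a ∪ b
  · rw [exRank_apply_mem hxa hxb h3, exRank_apply_mem hxa hxb h3]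
    have hx := he x
    by_cases h1 : y = va
    · subst h1
      rw [exRank_apply_va hvavb, exRank_apply_va hvavb]
      simp only [if_true, Bool.false_eq_true, if_false]
      omega
    · by_cases h2 : y = vb
      · subst h2
        rw [exRank_apply_vb hvavb, exRank_apply_vb hvavb]
        simp only [if_true, Bool.false_eq_true, if_false]
        omega
      · by_cases h4 : y ∈ a ∪ b
        · rw [exRank_apply_mem h1 h2 h4, exRank_apply_mem h1 h2 h4]
        · rw [exRank_apply_not_mem h1 h2 h4, exRank_apply_not_mem h1 h2 h4]
  · rw [exRank_apply_not_mem hxa hxb h3, exRank_apply_not_mem hxa hxb h3]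
    have hx := he x
    by_cases h1 : y = va
    · subst h1
      rw [exRank_apply_va hvavb, exRank_apply_va hvavb]
      simp only [if_true, Bool.false_eq_true, if_false]
      omega
    · by_cases h2 : y = vb
      · subst h2
        rw [exRank_apply_vb hvavb, exRank_apply_vb hvavb]
        simp only [if_true, Bool.false_eq_true, if_false]
        omega
      · by_cases h4 : y ∈ a ∪ b
        · rw [exRank_apply_mem h1 h2 h4, exRank_apply_mem h1 h2 h4]
        · rw [exRank_apply_not_mem h1 h2 h4, exRank_apply_not_mem h1 h2 h4]

lemma rankTubing_erase_subset {G : SimpleGraph V} {ρ ρ' : V → ℕ} {a b u : Finset V} {va vb : V}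
    (h01 : tubeAt G ρ va = a) (h02 : tubeAt G ρ vb = u)
    (h11 : tubeAt G ρ' vb = b) (h12 : tubeAt G ρ' va = u)
    (hoth : ∀ x, x ≠ va → x ≠ vb → tubeAt G ρ x = tubeAt G ρ' x)
    (hinj' : Function.Injective (tubeAt G ρ')) (hub : u ≠ b) :
    (rankTubing G ρ).erase a ⊆ (rankTubing G ρ').erase b := by
  intro r hr
  obtain ⟨hra, hrT⟩ := Finset.mem_erase.1 hr
  obtain ⟨x, -, hx⟩ := Finset.mem_image.1 hrT
  by_cases h1 : x = va
  · subst h1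
    exact absurd (hx.symm.trans h01) hra
  · by_cases h2 : x = vb
    · subst h2
      refine Finset.mem_erase.2 ⟨?_, Finset.mem_image.2 ⟨va, Finset.mem_univ va, ?_⟩⟩
      · rw [← hx, h02]; exact hub
      · rw [h12, ← h02, hx]
    · have heq := hoth x h1 h2
      refine Finset.mem_erase.2 ⟨?_, Finset.mem_image.2 ⟨x, Finset.mem_univ x, ?_⟩⟩
      · intro hrb
        have : tubeAt G ρ' x = tubeAt G ρ' vb := by rw [← heq, hx, hrb, h11]
        exact h2 (hinj' this)
      · rw [← heq, hx]

/-- The main local criterion for exchangeability. -/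
lemma exchangeable_of_local (G : SimpleGraph V) {a b : Finset V} (ha : IsTube G a)
    (hb : IsTube G b) (hu : IsTube G (a ∪ b)) {va vb : V}
    (hva : va ∈ a) (hvab : va ∉ b) (hvb : vb ∈ b) (hvba : vb ∉ a)
    (hea : ∀ x ∈ a, ∀ y ∈ (b \ a).erase vb, ¬ G.Adj x y)
    (heb : ∀ x ∈ b, ∀ y ∈ (a \ b).erase va, ¬ G.Adj x y) :
    ExchangeableT G a b := by
  have hvavb : va ≠ vb := fun h => hvab (h ▸ hvb)
  have hvaU : va ∈ a ∪ b := Finset.mem_union_left _ hva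
  have hvbU : vb ∈ a ∪ b := Finset.mem_union_right _ hvb
  set ρ0 := exRank a b va vb false with hρ0
  set ρ1 := exRank a b va vb true with hρ1
  have hρ1' : ρ1 = exRank b a vb va false := exRank_flip_eq hvavb
  have hinj0 : Function.Injective ρ0 := exRank_injective hvavb false
  have hinj1 : Function.Injective ρ1 := exRank_injective hvavb true
  -- the four special tubes
  have hT0a : tubeAt G ρ0 va = a := by
    unfold tubeAt
    rw [hρ0, exRank_pset_va hvaU hvbU hvavb]
    refine comp_eq_of_no_edge ((tube_iff G a).1 ha).2 ?_ hva ?_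
    · intro y hy
      exact Finset.mem_erase.2 ⟨fun h => hvba (h ▸ hy), Finset.mem_union_left _ hy⟩
    · intro y hy z hz
      refine hea y hy z ?_
      obtain ⟨hz1, hz2⟩ := Finset.mem_sdiff.1 hz
      obtain ⟨hz3, hz4⟩ := Finset.mem_erase.1 hz1
      rcases Finset.mem_union.1 hz4 with h | h
      · exact absurd h hz2
      · exact Finset.mem_erase.2 ⟨hz3, Finset.mem_sdiff.2 ⟨h, hz2⟩⟩
  have hT0u : tubeAt G ρ0 vb = a ∪ b := by
    unfold tubeAt
    rw [hρ0, exRank_pset_vb hvaU hvbU hvavb]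
    exact comp_eq_self_of_conn ((tube_iff G _).1 hu).2 hvbU
  have hu' : IsTube G (b ∪ a) := by rwa [Finset.union_comm]
  have hT1b : tubeAt G ρ1 vb = b := by
    unfold tubeAt
    rw [hρ1] at hρ1'
    rw [hρ1, hρ1', exRank_pset_va (Finset.mem_union_left _ hvb)
      (Finset.mem_union_right _ hva) (Ne.symm hvavb)]
    refine comp_eq_of_no_edge ((tube_iff G b).1 hb).2 ?_ hvb ?_
    · intro y hy
      exact Finset.mem_erase.2 ⟨fun h => hvab (h ▸ hy), Finset.mem_union_left _ hy⟩
    · intro y hy z hz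
      refine heb y hy z ?_
      obtain ⟨hz1, hz2⟩ := Finset.mem_sdiff.1 hz
      obtain ⟨hz3, hz4⟩ := Finset.mem_erase.1 hz1
      rcases Finset.mem_union.1 hz4 with h | h
      · exact absurd h hz2
      · exact Finset.mem_erase.2 ⟨hz3, Finset.mem_sdiff.2 ⟨h, hz2⟩⟩
  have hT1u : tubeAt G ρ1 va = a ∪ b := by
    unfold tubeAt
    rw [hρ1] at hρ1'
    rw [hρ1, hρ1', exRank_pset_vb (Finset.mem_union_left _ hvb)
      (Finset.mem_union_right _ hva) (Ne.symm hvavb), Finset.union_comm b a]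
    exact comp_eq_self_of_conn ((tube_iff G _).1 hu).2 hvaU
  have hoth : ∀ x, x ≠ va → x ≠ vb → tubeAt G ρ0 x = tubeAt G ρ1 x := by
    intro x h1 h2
    unfold tubeAt
    rw [hρ0, hρ1, exRank_pset_other hvavb h1 h2]
  have hanb : a ≠ b := fun h => hvab (h ▸ hva)
  have huna : a ∪ b ≠ a := by
    intro h
    exact hvba (h ▸ hvbU)
  have hunb : a ∪ b ≠ b := by
    intro h
    exact hvab (h ▸ hvaU)
  refine ⟨hanb, rankTubing G ρ0, rankTubing G ρ1,
    rankTubing_isMaxTubing G hinj0, rankTubing_isMaxTubing G hinj1, ?_, ?_, ?_⟩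
  · exact hT0a ▸ Finset.mem_image.2 ⟨va, Finset.mem_univ va, rfl⟩
  · exact hT1b ▸ Finset.mem_image.2 ⟨vb, Finset.mem_univ vb, rfl⟩
  · apply Finset.Subset.antisymm
    · exact rankTubing_erase_subset hT0a hT0u hT1b hT1u hoth (tubeAt_injective hinj1) hunb
    · refine rankTubing_erase_subset hT1b hT1u hT0a hT0u ?_ (tubeAt_injective hinj0) huna
      intro x h1 h2
      exact (hoth x h2 h1).symm

end Exchange

/-- A tube compatible with everything in a maximal tubing belongs to it. -/
lemma mem_of_compatible_all {G : SimpleGraph V} {T : Finset (Finset V)}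
    (hT : IsMaxTubing G T) {u : Finset V} (hu : IsTube G u)
    (hcomp : ∀ x ∈ T, Compatible G u x) : u ∈ T := by
  have htub : IsTubing G (insert u T) := by
    refine ⟨?_, ?_, ?_⟩
    · intro x hx
      rcases Finset.mem_insert.1 hx with rfl | hx
      · exact hu
      · exact hT.1.1 x hx
    · intro x hx y hy
      rcases Finset.mem_insert.1 hx with hx' | hx' <;>
        rcases Finset.mem_insert.1 hy with hy' | hy'
      · rw [hx', hy']; exact Or.inl (le_refl _)
      · rw [hx']; exact hcomp y hy'
      · rw [hy']; exact compatible_symm (hcomp x hx')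
      · exact hT.1.2.1 x hx' y hy'
    · intro K h1 h2
      exact Finset.mem_insert_of_mem (hT.1.2.2 K h1 h2)
  have := hT.2 (insert u T) htub (Finset.subset_insert _ _)
  rw [this]
  exact Finset.mem_insert_self _ _

lemma hex_not_subsets {G : SimpleGraph V} {t t' : Finset V}
    (hex : ExchangeableT G t t') : ¬ Compatible G t' t := by
  obtain ⟨hne, T, T', hT, hT', htT, ht'T', herase⟩ := hex
  intro hcomp
  have ht'tube : IsTube G t' := hT'.1.1 t' ht'T'
  have ht'T : t' ∈ T := by
    refine mem_of_compatible_all hT ht'tube ?_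
    intro x hx
    by_cases hxt : x = t
    · rw [hxt]; exact hcomp
    · have hxT' : x ∈ T' := by
        have : x ∈ T.erase t := Finset.mem_erase.2 ⟨hxt, hx⟩
        rw [herase] at this
        exact Finset.mem_of_mem_erase this
      exact hT'.1.2.1 t' ht'T' x hxT'
  have : t' ∈ T.erase t := Finset.mem_erase.2 ⟨Ne.symm hne, ht'T⟩
  rw [herase] at this
  exact (Finset.notMem_erase t' T') this

lemma hex_not_subset' {G : SimpleGraph V} {t t' : Finset V}
    (hex : ExchangeableT G t t') : ¬ t ⊆ t' := by
  intro h
  exact hex_not_subsets hex (Or.inr (Or.inl h))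

lemma hex_not_subset {G : SimpleGraph V} {t t' : Finset V}
    (hex : ExchangeableT G t t') : ¬ t' ⊆ t := by
  intro h
  exact hex_not_subsets hex (Or.inl h)

lemma hex_union_tube {G : SimpleGraph V} {t t' : Finset V} (ht : IsTube G t)
    (ht' : IsTube G t') (hex : ExchangeableT G t t') : IsTube G (t ∪ t') := by
  have h := hex_not_subsets hex
  unfold Compatible at h
  push_neg at h
  obtain ⟨h1, h2, h3⟩ := h
  by_cases hint : (t' ∩ t).Nonempty
  · rw [Finset.inter_comm] at hint
    exact isTube_union_of_meet ht ht' hint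
  · rw [Finset.not_nonempty_iff_eq_empty] at hint
    have := h3 hint
    rwa [Finset.union_comm] at this

/-- There is an edge from `t` into `t' \ t`. -/
lemma hex_exists_nbr {G : SimpleGraph V} {t t' : Finset V} (ht : IsTube G t)
    (ht' : IsTube G t') (hex : ExchangeableT G t t') :
    ∃ u ∈ t' \ t, ∃ z ∈ t, G.Adj z u := by
  have hut := hex_union_tube ht ht' hex
  have hd : (t' \ t).Nonempty := by
    by_contra h
    rw [Finset.not_nonempty_iff_eq_empty, Finset.sdiff_eq_empty_iff_subset] at h
    exact hex_not_subset hex h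
  by_cases hint : (t ∩ t').Nonempty
  · have hconn : Conn G t' := ((tube_iff G t').1 ht').2
    have hsub : t ∩ t' ⊆ t' := Finset.inter_subset_right
    have hd' : (t' \ (t ∩ t')).Nonempty := by
      obtain ⟨u, hu⟩ := hd
      obtain ⟨hu1, hu2⟩ := Finset.mem_sdiff.1 hu
      exact ⟨u, Finset.mem_sdiff.2 ⟨hu1, fun h => hu2 (Finset.mem_inter.1 h).1⟩⟩
    obtain ⟨z, hz, u, hu, hadj⟩ := exists_crossing_edge hconn hsub hint hd'
    obtain ⟨hu1, hu2⟩ := Finset.mem_sdiff.1 hu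
    refine ⟨u, Finset.mem_sdiff.2 ⟨hu1, fun h => hu2 (Finset.mem_inter.2 ⟨h, hu1⟩)⟩,
      z, (Finset.mem_inter.1 hz).1, hadj⟩
  · have hconn : Conn G (t ∪ t') := ((tube_iff G _).1 hut).2
    have hd' : ((t ∪ t') \ t).Nonempty := by
      obtain ⟨u, hu⟩ := hd
      obtain ⟨hu1, hu2⟩ := Finset.mem_sdiff.1 hu
      exact ⟨u, Finset.mem_sdiff.2 ⟨Finset.mem_union_right _ hu1, hu2⟩⟩
    obtain ⟨z, hz, u, hu, hadj⟩ :=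
      exists_crossing_edge hconn Finset.subset_union_left ht.1 hd'
    obtain ⟨hu1, hu2⟩ := Finset.mem_sdiff.1 hu
    have hu3 : u ∈ t' := by
      rcases Finset.mem_union.1 hu1 with h | h
      · exact absurd h hu2
      · exact h
    exact ⟨u, Finset.mem_sdiff.2 ⟨hu3, hu2⟩, z, hz, hadj⟩

/-- Any two neighbors of `t` inside `t' \ t` coincide, for exchangeable tubes. -/
lemma hex_nbr_unique {G : SimpleGraph V} {t t' : Finset V} (ht : IsTube G t)
    (ht' : IsTube G t') (hex : ExchangeableT G t t') :
    ∀ u₁ ∈ t' \ t, ∀ u₂ ∈ t' \ t, (∃ z ∈ t, G.Adj z u₁) → (∃ z ∈ t, G.Adj z u₂) → u₁ = u₂ := by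
  obtain ⟨hne, T, T', hT, hT', htT, ht'T', herase⟩ := hex
  have hexfull : ExchangeableT G t t' := ⟨hne, T, T', hT, hT', htT, ht'T', herase⟩
  have htbar : IsTube G (t ∪ t') := hex_union_tube ht ht' hexfull
  have htconn : Conn G t := ((tube_iff G t).1 ht).2
  have hedge : ∃ z ∈ t, ∃ u ∈ t', G.Adj z u := by
    obtain ⟨u, hu, z, hz, hadj⟩ := hex_exists_nbr ht ht' hexfull
    exact ⟨z, hz, u, (Finset.mem_sdiff.1 hu).1, hadj⟩
  have hmemT' : ∀ x ∈ T, x ≠ t → x ∈ T' := by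
    intro x hx hxt
    have : x ∈ T.erase t := Finset.mem_erase.2 ⟨hxt, hx⟩
    rw [herase] at this
    exact Finset.mem_of_mem_erase this
  have hcompt' : ∀ x ∈ T, x ≠ t → Compatible G x t' := fun x hx hxt =>
    hT'.1.2.1 x (hmemT' x hx hxt) t' ht'T'
  have hsupset : ∀ x ∈ T, t ⊆ x → x ≠ t → t ∪ t' ⊆ x := by
    intro x hx htx hxt
    rcases hcompt' x hx hxt with h | h | ⟨hd, hnt⟩
    · exact absurd (htx.trans h) (hex_not_subset' hexfull)
    · exact Finset.union_subset htx h
    · obtain ⟨z, hz, u, hu, hadj⟩ := hedge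
      exact absurd (isTube_union_of_adj (hT.1.1 x hx) ht' (htx hz) hu hadj) hnt
  have htbarT : (t ∪ t') ∈ T := by
    refine mem_of_compatible_all hT htbar ?_
    intro x hx
    by_cases hxt : x = t
    · rw [hxt]; exact Or.inr (Or.inl Finset.subset_union_left)
    · rcases hT.1.2.1 x hx t htT with h1 | h1 | ⟨hd, hnt⟩
      · exact Or.inr (Or.inl (h1.trans Finset.subset_union_left))
      · exact Or.inl (hsupset x hx h1 hxt)
      · rcases hcompt' x hx hxt with h2 | h2 | ⟨hd', hnt'⟩
        · exact Or.inr (Or.inl (h2.trans Finset.subset_union_right))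
        · obtain ⟨z, hz, u, hu, hadj⟩ := hedge
          exact absurd (isTube_union_of_adj (hT.1.1 x hx) ht (h2 hu) hz hadj.symm) hnt
        · refine Or.inr (Or.inr ⟨?_, ?_⟩)
          · rw [Finset.union_inter_distrib_right, Finset.inter_comm t x, Finset.inter_comm t' x,
              hd, hd', Finset.union_empty]
          · intro hcon
            rw [Finset.union_comm] at hcon
            have hconn := ((tube_iff G _).1 hcon).2
            obtain ⟨z₀, hz₀⟩ := ht.1
            have hz₀x : z₀ ∉ x := by
              intro h
              have : z₀ ∈ x ∩ t := Finset.mem_inter.2 ⟨h, hz₀⟩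
              simp [hd] at this
            obtain ⟨a, ha, c, hc, hadj⟩ := exists_crossing_edge hconn
              Finset.subset_union_left (hT.1.1 x hx).1
              ⟨z₀, Finset.mem_sdiff.2 ⟨Finset.mem_union_right _ (Finset.mem_union_left _ hz₀),
                hz₀x⟩⟩
            obtain ⟨hc1, hc2⟩ := Finset.mem_sdiff.1 hc
            have hc3 : c ∈ t ∪ t' := by
              rcases Finset.mem_union.1 hc1 with h | h
              · exact absurd h hc2
              · exact h
            rcases Finset.mem_union.1 hc3 with h | h
            · exact absurd (isTube_union_of_adj (hT.1.1 x hx) ht ha h hadj) hnt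
            · exact absurd (isTube_union_of_adj (hT.1.1 x hx) ht' ha h hadj) hnt'
  have hcontain : ∀ y ∈ T, ∀ u, u ∉ t → u ∈ y → (∃ z ∈ t, G.Adj z u) → t ⊆ y := by
    intro y hy u hut huy ⟨z, hz, hadj⟩
    rcases hT.1.2.1 y hy t htT with h | h | ⟨hd, hnt⟩
    · exact absurd (h huy) hut
    · exact h
    · exact absurd (isTube_union_of_adj (hT.1.1 y hy) ht huy hz hadj.symm) hnt
  intro u₁ h₁ u₂ h₂ e₁ e₂
  by_contra hne12
  obtain ⟨hu₁t', hu₁t⟩ := Finset.mem_sdiff.1 h₁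
  obtain ⟨hu₂t', hu₂t⟩ := Finset.mem_sdiff.1 h₂
  have hu₁bar : u₁ ∈ t ∪ t' := Finset.mem_union_right _ hu₁t'
  have hu₂e : u₂ ∈ (t ∪ t').erase u₁ :=
    Finset.mem_erase.2 ⟨Ne.symm hne12, Finset.mem_union_right _ hu₂t'⟩
  set c := comp G ((t ∪ t').erase u₁) u₂ with hc
  have htsub : t ⊆ (t ∪ t').erase u₁ := fun z hz =>
    Finset.mem_erase.2 ⟨fun h => hu₁t (h ▸ hz), Finset.mem_union_left _ hz⟩
  have htc : t ⊆ c := by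
    obtain ⟨z₂, hz₂, hadj₂⟩ := e₂
    have hz₂c : z₂ ∈ c := mem_comp.2 ⟨htsub hz₂,
      Relation.ReflTransGen.single ⟨hu₂e, htsub hz₂, hadj₂.symm⟩⟩
    exact conn_subset_comp htconn htsub hz₂ hz₂c
  have hctube : IsTube G c := comp_tube hu₂e
  have hcsubbar : c ⊆ t ∪ t' := comp_subset.trans (Finset.erase_subset _ _)
  have hcsube : c ⊆ (t ∪ t').erase u₁ := comp_subset
  have hcT : c ∈ T := by
    refine mem_of_compatible_all hT hctube ?_
    intro x hx
    by_cases hxt : x = t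
    · rw [hxt]; exact Or.inr (Or.inl htc)
    · rcases hT.1.2.1 x hx t htT with h1 | h1 | ⟨hd, hnt⟩
      · exact Or.inr (Or.inl (h1.trans htc))
      · exact Or.inl (hcsubbar.trans (hsupset x hx h1 hxt))
      · have hxtube := hT.1.1 x hx
        have htne := ht.1
        have hxnt : ∀ z, z ∈ t → z ∉ x := by
          intro z hz hzx
          have : z ∈ x ∩ t := Finset.mem_inter.2 ⟨hzx, hz⟩
          simp [hd] at this
        have hu₁x : u₁ ∉ x := by
          intro h
          obtain ⟨z₀, hz₀⟩ := htne
          exact hxnt z₀ hz₀ (hcontain x hx u₁ hu₁t h e₁ hz₀)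
        rcases hT.1.2.1 x hx (t ∪ t') htbarT with h2 | h2 | ⟨hd', hnt'⟩
        · -- x inside the big tube, avoiding u₁
          have hxsube : x ⊆ (t ∪ t').erase u₁ := fun y hy =>
            Finset.mem_erase.2 ⟨fun h => hu₁x (h ▸ hy), h2 hy⟩
          by_cases hmeet : (x ∩ c).Nonempty
          · obtain ⟨z, hz⟩ := hmeet
            have hz' := Finset.mem_inter.1 hz
            exact Or.inr (Or.inl (conn_subset_comp ((tube_iff G x).1 hxtube).2
              hxsube hz'.1 hz'.2))
          · have hdisj : c ∩ x = ∅ := by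
              rw [Finset.inter_comm]
              exact Finset.not_nonempty_iff_eq_empty.1 hmeet
            refine Or.inr (Or.inr ⟨hdisj, ?_⟩)
            refine not_tube_of_no_edge hctube.1 hxtube.1 hdisj ?_
            intro a ha b hb hadj
            have hbc : b ∈ c := mem_comp.2 ⟨hxsube hb,
              (mem_comp.1 ha).2.tail ⟨mem_comp.1 ha |>.1, hxsube hb, hadj⟩⟩
            exact hmeet ⟨b, Finset.mem_inter.2 ⟨hb, hbc⟩⟩
        · obtain ⟨z₀, hz₀⟩ := htne
          exact absurd (h2 (Finset.mem_union_left _ hz₀)) (hxnt z₀ hz₀)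
        · have hdisj : c ∩ x = ∅ := by
            rw [Finset.eq_empty_iff_forall_notMem]
            intro y hy
            obtain ⟨hy1, hy2⟩ := Finset.mem_inter.1 hy
            have : y ∈ x ∩ (t ∪ t') := Finset.mem_inter.2 ⟨hy2, hcsubbar hy1⟩
            simp [hd'] at this
          refine Or.inr (Or.inr ⟨hdisj, ?_⟩)
          refine not_tube_of_no_edge hctube.1 hxtube.1 hdisj ?_
          intro a ha b hb hadj
          exact hnt' (isTube_union_of_adj hxtube htbar hb (hcsubbar ha) hadj.symm)
  have hcnet : c ≠ t := by
    intro h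
    exact hu₂t (h ▸ mem_comp_self hu₂e)
  have := hsupset c hcT htc hcnet
  have hu₁c : u₁ ∈ c := this hu₁bar
  exact (Finset.mem_erase.1 (hcsube hu₁c)).1 rfl

lemma gccSet_self {G : SimpleGraph V} {s : Finset V} (hs : IsTube G s) :
    gccSet G s = {s} := by
  ext K
  simp only [gccSet, tubes, Finset.mem_filter, Finset.mem_powerset, Finset.mem_singleton]
  constructor
  · rintro ⟨⟨-, hK⟩, hKs, hmax⟩
    exact hmax s hs (le_refl _) hKs
  · rintro rfl
    exact ⟨⟨Finset.subset_univ _, hs⟩, le_refl _,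
      fun C hC hCs hsC => Finset.Subset.antisymm hsC hCs⟩
theorem stmt15 (G : SimpleGraph V) (t t' : Finset V)
    (ht : IsTube G t) (ht' : IsTube G t') (hex : ExchangeableT G t t')
    (hbig : 2 ≤ (t \ t').card)
    (v : V) (hv : v ∈ t \ t') (hvn : NbrOf G t' v)
    (hvuniq : ∀ u ∈ t \ t', NbrOf G t' u → u = v)
    (w : V) (hw : w ∈ t \ t') (hwv : w ≠ v) (hwnd : NonDisc G (t \ t') w) :
    ExchangeableT G (t.erase w) t' ∧
    ExchangeableT G t ((t ∪ t').erase w) ∧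
    nvec G (t.erase w) t' + nvec G t ((t ∪ t').erase w) = nvec G t t' := by
  obtain ⟨hwt, hwt'⟩ := Finset.mem_sdiff.1 hw
  obtain ⟨hvt, hvt'⟩ := Finset.mem_sdiff.1 hv
  have hvw : v ≠ w := Ne.symm hwv
  -- w has no neighbor in t'
  have hwnadj : ∀ x ∈ t', ¬ G.Adj w x := by
    intro x hx hadj
    exact hwv (hvuniq w hw ⟨hwt', x, hx, hadj⟩)
  -- s₀ := (t \ t').erase w is a nonempty tube
  have hs₀ne : ((t \ t').erase w).Nonempty := by
    rw [← Finset.card_pos, Finset.card_erase_of_mem hw]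
    omega
  have hs₀ : IsTube G ((t \ t').erase w) := by
    rcases hwnd.2 with h | h
    · rw [h] at hs₀ne
      exact absurd hs₀ne Finset.not_nonempty_empty
    · exact h
  have hs₀sub : (t \ t').erase w ⊆ t.erase w := by
    intro y hy
    obtain ⟨hy1, hy2⟩ := Finset.mem_erase.1 hy
    exact Finset.mem_erase.2 ⟨hy1, (Finset.mem_sdiff.1 hy2).1⟩
  -- s := t.erase w is a tube
  have hs : IsTube G (t.erase w) := by
    rw [tube_iff]
    refine ⟨⟨v, Finset.mem_erase.2 ⟨hvw, hvt⟩⟩, ?_⟩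
    refine conn_erase_of_nbrs ((tube_iff G t).1 ht).2 hwt hs₀sub
      ((tube_iff G _).1 hs₀).2 hs₀ne ?_
    intro y hy hadj
    have hynt' : y ∉ t' := fun h => hwnadj y h hadj
    exact Finset.mem_erase.2 ⟨hadj.ne', Finset.mem_sdiff.2 ⟨hy, hynt'⟩⟩
  -- structure from exchangeability
  have htbar : IsTube G (t ∪ t') := hex_union_tube ht ht' hex
  obtain ⟨v', hv'mem, z, hzt, hzadj⟩ := hex_exists_nbr ht ht' hex
  have huniq := hex_nbr_unique ht ht' hex
  obtain ⟨hv't', hv't⟩ := Finset.mem_sdiff.1 hv'mem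
  have hv'w : v' ≠ w := fun h => hwt' (h ▸ hv't')
  have hzw : z ≠ w := fun h => hwnadj v' hv't' (h ▸ hzadj)
  -- set identities
  have A1 : (t.erase w) ∩ t' = t ∩ t' := by
    ext y
    by_cases hyw : y = w
    · subst hyw; simp [hwt']
    · simp [hyw]
      all_goals tauto
  have A2 : (t.erase w) ∪ t' = (t ∪ t').erase w := by
    ext y
    by_cases hyw : y = w
    · subst hyw; simp [hwt']
    · simp [hyw]
      all_goals tauto
  have A3 : t ∪ ((t ∪ t').erase w) = t ∪ t' := by
    ext y
    by_cases hyw : y = w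
    · subst hyw; simp [hwt]
    · simp [hyw]
      all_goals tauto
  have A4 : t ∩ ((t ∪ t').erase w) = t.erase w := by
    ext y
    by_cases hyw : y = w
    · subst hyw; simp
    · simp [hyw]
      all_goals tauto
  have A5 : t' \ (t.erase w) = t' \ t := by
    ext y
    by_cases hyw : y = w
    · subst hyw; simp [hwt', hwt]
    · simp [hyw]
      all_goals tauto
  have A6 : (t.erase w) \ t' = (t \ t').erase w := by
    ext y
    by_cases hyw : y = w
    · subst hyw; simp
    · simp [hyw]
      all_goals tauto
  have A7 : ((t ∪ t').erase w) \ t = t' \ t := by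
    ext y
    by_cases hyw : y = w
    · subst hyw; simp [hwt]
    · simp [hyw]
      all_goals tauto
  have A8 : t \ ((t ∪ t').erase w) = {w} := by
    ext y
    by_cases hyw : y = w
    · subst hyw; simp [hwt]
    · simp [hyw]
      all_goals tauto
      all_goals tauto
  have hs' : IsTube G ((t ∪ t').erase w) := by
    rw [← A2]
    exact isTube_union_of_adj hs ht' (Finset.mem_erase.2 ⟨hzw, hzt⟩) hv't' hzadj
  -- all neighbors of t inside t' \ t are v'
  have hnb : ∀ x ∈ t, ∀ y ∈ (t' \ t).erase v', ¬ G.Adj x y := by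
    intro x hx y hy hadj
    obtain ⟨hy1, hy2⟩ := Finset.mem_erase.1 hy
    exact hy1 (huniq y hy2 v' hv'mem ⟨x, hx, hadj⟩ ⟨z, hzt, hzadj⟩)
  -- Exchangeability of (t.erase w, t')
  have hex1 : ExchangeableT G (t.erase w) t' := by
    refine exchangeable_of_local G hs ht' (by rw [A2]; exact hs')
      (va := v) (vb := v') (Finset.mem_erase.2 ⟨hvw, hvt⟩) hvt' hv't'
      (fun h => hv't (Finset.mem_of_mem_erase h)) ?_ ?_
    · intro x hx y hy
      rw [A5] at hy
      exact hnb x (Finset.mem_of_mem_erase hx) y hy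
    · intro x hx y hy hadj
      rw [A6] at hy
      obtain ⟨hy1, hy2⟩ := Finset.mem_erase.1 hy
      obtain ⟨hy3, hy4⟩ := Finset.mem_erase.1 hy2
      exact hy1 (hvuniq y hy4 ⟨(Finset.mem_sdiff.1 hy4).2, x, hx, hadj.symm⟩)
  -- Exchangeability of (t, (t ∪ t').erase w)
  have hex2 : ExchangeableT G t ((t ∪ t').erase w) := by
    refine exchangeable_of_local G ht hs' (by rw [A3]; exact htbar)
      (va := w) (vb := v') hwt (Finset.notMem_erase _ _)
      (Finset.mem_erase.2 ⟨hv'w, Finset.mem_union_right _ hv't'⟩) hv't ?_ ?_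
    · intro x hx y hy
      rw [A7] at hy
      exact hnb x hx y hy
    · intro x hx y hy
      rw [A8] at hy
      simp at hy
  refine ⟨hex1, hex2, ?_⟩
  unfold nvec
  rw [A1, A2, A3, A4, gccSet_self hs, Finset.sum_singleton]
  abel
end

section
/- Let G be a graph. The maximal exchangeable pairs of tubes of G (pairs {t,t'} with t \ {v} = t' \ {v'} for the unique neighbor v of t' in t \ t' and the unique neighbor v' of t in t' \ t) are exactly the pairs {s \ {v'}, s \ {v}} where s is a tube of G and v ≠ v' are two non-disconnecting vertices of s. -/
open scoped Classical

variable {V : Type*} [Fintype V] [DecidableEq V]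

/-- A maximal exchangeable pair of tubes. -/
def MaxExchPair (G : SimpleGraph V) (t t' : Finset V) : Prop :=
  ExchangeableT G t t' ∧
  ∃ v v', t \ t' = {v} ∧ t' \ t = {v'} ∧ NbrOf G t' v ∧ NbrOf G t v'

section Core
variable {G : SimpleGraph V}

lemma reach_invariant {W : Type*} {H : SimpleGraph W} (P : W → Prop)
    (hP : ∀ x y, H.Adj x y → P x → P y) {x y : W} (h : H.Reachable x y) (hx : P x) : P y := by
  obtain ⟨p⟩ := h
  induction p with
  | nil => exact hx
  | cons h p ih => exact ih (hP _ _ h hx)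

lemma reach_crossing {W : Type*} {H : SimpleGraph W} (P : W → Prop)
    {x y : W} (h : H.Reachable x y) (hx : P x) (hy : ¬ P y) :
    ∃ a b, H.Adj a b ∧ P a ∧ ¬ P b := by
  by_contra hc
  push_neg at hc
  exact hy (reach_invariant P (fun a b hab ha => hc a b hab ha) h hx)

lemma induce_singleton_connected (G : SimpleGraph V) (x : V) :
    (G.induce ({x} : Set V)).Connected := by
  rw [SimpleGraph.connected_iff_exists_forall_reachable]
  refine ⟨⟨x, rfl⟩, ?_⟩
  rintro ⟨y, hy⟩
  rcases hy with rfl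
  rfl

lemma isTube_singleton (G : SimpleGraph V) (x : V) : IsTube G ({x} : Finset V) := by
  refine ⟨⟨x, Finset.mem_singleton_self x⟩, ?_⟩
  rw [Finset.coe_singleton]
  exact induce_singleton_connected G x

lemma isTube_union_adj {A B : Finset V} (hA : IsTube G A) (hB : IsTube G B)
    {a b : V} (ha : a ∈ A) (hb : b ∈ B) (hadj : G.Adj a b) : IsTube G (A ∪ B) := by
  refine ⟨⟨a, Finset.mem_union_left _ ha⟩, ?_⟩
  rw [Finset.coe_union]
  exact G.connected_induce_union hA.2.preconnected hB.2.preconnected (by exact_mod_cast ha) (by exact_mod_cast hb) hadj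

lemma isTube_union_of_inter {A B : Finset V} (hA : IsTube G A) (hB : IsTube G B)
    (h : (A ∩ B).Nonempty) : IsTube G (A ∪ B) := by
  obtain ⟨x, hx⟩ := h
  rw [Finset.mem_inter] at hx
  refine ⟨⟨x, Finset.mem_union_left _ hx.1⟩, ?_⟩
  rw [Finset.coe_union]
  exact G.induce_union_connected hA.2.preconnected hB.2.preconnected ⟨x, by exact_mod_cast hx.1, by exact_mod_cast hx.2⟩

lemma isTube_insert_adj {t : Finset V} (ht : IsTube G t)
    {w x : V} (hx : x ∈ t) (hadj : G.Adj w x) : IsTube G (insert w t) := by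
  have h := isTube_union_adj (isTube_singleton G w) ht (Finset.mem_singleton_self w) hx hadj
  rwa [Finset.insert_eq]

lemma not_isTube_separated {A B : Finset V} (hA : A.Nonempty) (hB : B.Nonempty)
    (hdisj : ∀ x, ¬(x ∈ A ∧ x ∈ B)) (hadj : ∀ a ∈ A, ∀ b ∈ B, ¬ G.Adj a b) :
    ¬ IsTube G (A ∪ B) := by
  rintro ⟨-, hconn⟩
  obtain ⟨a, ha⟩ := hA
  obtain ⟨b, hb⟩ := hB
  have hr := hconn.preconnected ⟨a, by simpa using Or.inl ha⟩ ⟨b, by simpa using Or.inr hb⟩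
  have hbA : b ∈ A := by
    refine reach_invariant (H := G.induce ((A ∪ B : Finset V) : Set V))
      (fun z => (z : V) ∈ A) ?_ hr ha
    rintro ⟨x, hx⟩ ⟨y, hy⟩ hxy hxA
    simp only [SimpleGraph.comap_adj, Function.Embedding.coe_subtype] at hxy
    have hy' : y ∈ A ∪ B := by exact_mod_cast hy
    rcases Finset.mem_union.mp hy' with h | h
    · exact h
    · exact absurd hxy (hadj x hxA y h)
  exact hdisj b ⟨hbA, hb⟩

lemma exists_adj_of_mem_tube {s : Finset V} (hs : IsTube G s) {v y : V}
    (hv : v ∈ s) (hy : y ∈ s) (hne : y ≠ v) :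
    ∃ x ∈ s, x ≠ v ∧ G.Adj v x := by
  have hr := hs.2.preconnected ⟨v, by exact_mod_cast hv⟩ ⟨y, by exact_mod_cast hy⟩
  obtain ⟨a, b, hab, ha, hb⟩ :=
    reach_crossing (fun z : ((s : Set V) : Set V) => (z : V) = v) hr rfl (by simpa using hne)
  simp only [SimpleGraph.comap_adj, Function.Embedding.coe_subtype] at hab
  refine ⟨b, by exact_mod_cast b.2, hb, ?_⟩
  rwa [ha] at hab

/-- crossing edge out of a proper subset of a tube -/
lemma exists_crossing_edge_s16 {s A : Finset V} (hs : IsTube G s) {a b : V}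
    (ha : a ∈ s) (hb : b ∈ s) (haA : a ∈ A) (hbA : b ∉ A) :
    ∃ x ∈ A, ∃ y ∈ s, y ∉ A ∧ G.Adj x y := by
  have hr := hs.2.preconnected ⟨a, by exact_mod_cast ha⟩ ⟨b, by exact_mod_cast hb⟩
  obtain ⟨x, y, hxy, hx, hy⟩ :=
    reach_crossing (fun z : ((s : Set V) : Set V) => (z : V) ∈ A) hr haA hbA
  simp only [SimpleGraph.comap_adj, Function.Embedding.coe_subtype] at hxy
  exact ⟨x, hx, y, by exact_mod_cast y.2, hy, hxy⟩

end Core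
section Gcc
variable {G : SimpleGraph V}

lemma mem_gccSet_iff {U K : Finset V} :
    K ∈ gccSet G U ↔ IsTube G K ∧ K ⊆ U ∧
      ∀ C : Finset V, IsTube G C → C ⊆ U → K ⊆ C → K = C := by
  simp only [gccSet, tubes, Finset.mem_filter, Finset.mem_powerset]
  constructor
  · rintro ⟨⟨-, h1⟩, h2, h3⟩; exact ⟨h1, h2, h3⟩
  · rintro ⟨h1, h2, h3⟩; exact ⟨⟨Finset.subset_univ K, h1⟩, h2, h3⟩

lemma exists_gcc_above {A U : Finset V} (hA : IsTube G A) (hAU : A ⊆ U) :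
    ∃ K, K ∈ gccSet G U ∧ A ⊆ K := by
  classical
  set S := Finset.univ.powerset.filter (fun K => IsTube G K ∧ K ⊆ U ∧ A ⊆ K) with hSdef
  have hmemS : ∀ {K}, K ∈ S ↔ IsTube G K ∧ K ⊆ U ∧ A ⊆ K := by
    intro K
    simp [hSdef]
  have hAS : A ∈ S := hmemS.mpr ⟨hA, hAU, Finset.Subset.refl A⟩
  obtain ⟨K, hKS, hmax⟩ := S.exists_max_image Finset.card ⟨A, hAS⟩
  obtain ⟨hK, hKU, hAK⟩ := hmemS.mp hKS
  refine ⟨K, mem_gccSet_iff.mpr ⟨hK, hKU, ?_⟩, hAK⟩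
  intro C hC hCU hKC
  exact Finset.eq_of_subset_of_card_le hKC
    (hmax C (hmemS.mpr ⟨hC, hCU, hAK.trans hKC⟩))

lemma gcc_separated {U K K' : Finset V} (hK : K ∈ gccSet G U) (hK' : K' ∈ gccSet G U)
    (hne : K ≠ K') :
    (∀ x, ¬(x ∈ K ∧ x ∈ K')) ∧ (∀ a ∈ K, ∀ b ∈ K', ¬ G.Adj a b) := by
  obtain ⟨hKt, hKU, hKmax⟩ := mem_gccSet_iff.mp hK
  obtain ⟨hK't, hK'U, hK'max⟩ := mem_gccSet_iff.mp hK'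
  have key : IsTube G (K ∪ K') → False := by
    intro hu
    have h1 : K = K ∪ K' := hKmax _ hu (Finset.union_subset hKU hK'U) Finset.subset_union_left
    have h2 : K' = K ∪ K' := hK'max _ hu (Finset.union_subset hKU hK'U) Finset.subset_union_right
    exact hne (h1.trans h2.symm)
  constructor
  · rintro x ⟨hx, hx'⟩
    exact key (isTube_union_of_inter hKt hK't ⟨x, Finset.mem_inter.mpr ⟨hx, hx'⟩⟩)
  · intro a ha b hb hadj
    exact key (isTube_union_adj hKt hK't ha hb hadj)

lemma compat_of_subsets_gcc {U A B K K' : Finset V} (hA : IsTube G A) (hB : IsTube G B)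
    (hAK : A ⊆ K) (hBK' : B ⊆ K') (hK : K ∈ gccSet G U) (hK' : K' ∈ gccSet G U)
    (hne : K ≠ K') : Compatible G A B := by
  obtain ⟨hdisj, hadj⟩ := gcc_separated hK hK' hne
  refine Or.inr (Or.inr ⟨?_, ?_⟩)
  · rw [Finset.eq_empty_iff_forall_notMem]
    intro x hx
    rw [Finset.mem_inter] at hx
    exact hdisj x ⟨hAK hx.1, hBK' hx.2⟩
  · exact not_isTube_separated hA.1 hB.1
      (fun x ⟨hx, hx'⟩ => hdisj x ⟨hAK hx, hBK' hx'⟩)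
      (fun a ha b hb => hadj a (hAK ha) b (hBK' hb))

lemma compat_symm {A B : Finset V} (h : Compatible G A B) : Compatible G B A := by
  rcases h with h | h | ⟨h1, h2⟩
  · exact Or.inr (Or.inl h)
  · exact Or.inl h
  · exact Or.inr (Or.inr ⟨by rwa [Finset.inter_comm], by rwa [Finset.union_comm]⟩)

lemma compat_refl (A : Finset V) : Compatible G A A := Or.inl (Finset.Subset.refl A)

/-- any tube is compatible with any (globally) maximal tube -/
lemma compat_global_max {A K : Finset V} (hA : IsTube G A) (hK : IsTube G K)
    (hKmax : ∀ C : Finset V, IsTube G C → K ⊆ C → K = C) : Compatible G A K := by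
  obtain ⟨M, hM, hAM⟩ := exists_gcc_above hA (Finset.subset_univ A)
  have hKg : K ∈ gccSet G Finset.univ :=
    mem_gccSet_iff.mpr ⟨hK, Finset.subset_univ K, fun C hC _ hKC => hKmax C hC hKC⟩
  by_cases hMK : M = K
  · exact Or.inl (hMK ▸ hAM)
  · exact compat_of_subsets_gcc hA hK hAM (Finset.Subset.refl K) hM hKg hMK

/-- extension of a pairwise-compatible family to a maximal tubing -/
lemma exists_maxTubing_extending {𝒜 : Finset (Finset V)}
    (h1 : ∀ A ∈ 𝒜, IsTube G A) (h2 : ∀ A ∈ 𝒜, ∀ B ∈ 𝒜, Compatible G A B) :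
    ∃ T : Finset (Finset V), IsMaxTubing G T ∧ 𝒜 ⊆ T := by
  classical
  set 𝒜' : Finset (Finset V) := 𝒜 ∪ (gccSet G Finset.univ) with h𝒜'
  have htub : IsTubing G 𝒜' := by
    refine ⟨?_, ?_, ?_⟩
    · intro A hA
      rcases Finset.mem_union.mp hA with h | h
      · exact h1 A h
      · exact (mem_gccSet_iff.mp h).1
    · intro A hA B hB
      rcases Finset.mem_union.mp hA with hA' | hA' <;>
        rcases Finset.mem_union.mp hB with hB' | hB'
      · exact h2 A hA' B hB'
      · obtain ⟨hBt, -, hBmax⟩ := mem_gccSet_iff.mp hB'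
        exact compat_global_max (h1 A hA') hBt
          (fun C hC hBC => hBmax C hC (Finset.subset_univ C) hBC)
      · obtain ⟨hAt, -, hAmax⟩ := mem_gccSet_iff.mp hA'
        exact compat_symm (compat_global_max (h1 B hB') hAt
          (fun C hC hAC => hAmax C hC (Finset.subset_univ C) hAC))
      · by_cases hAB : A = B
        · exact hAB ▸ compat_refl A
        · obtain ⟨hAt, -, -⟩ := mem_gccSet_iff.mp hA'
          obtain ⟨hBt, -, -⟩ := mem_gccSet_iff.mp hB'
          exact compat_of_subsets_gcc hAt hBt (Finset.Subset.refl A) (Finset.Subset.refl B)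
            hA' hB' hAB
    · intro K hK hKmax
      exact Finset.mem_union_right _
        (mem_gccSet_iff.mpr ⟨hK, Finset.subset_univ K, fun C hC _ hKC => hKmax C hC hKC⟩)
  set S : Finset (Finset (Finset V)) :=
    Finset.univ.powerset.filter (fun T => IsTubing G T ∧ 𝒜' ⊆ T) with hSdef
  have hmemS : ∀ {T}, T ∈ S ↔ IsTubing G T ∧ 𝒜' ⊆ T := by
    intro T
    simp [hSdef]
  have hS : 𝒜' ∈ S := hmemS.mpr ⟨htub, Finset.Subset.refl _⟩
  obtain ⟨T, hTS, hmax⟩ := S.exists_max_image Finset.card ⟨𝒜', hS⟩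
  obtain ⟨hTtub, hT𝒜'⟩ := hmemS.mp hTS
  refine ⟨T, ⟨hTtub, ?_⟩, (Finset.subset_union_left).trans hT𝒜'⟩
  intro T' hT' hTT'
  exact Finset.eq_of_subset_of_card_le hTT' (hmax T' (hmemS.mpr ⟨hT', hT𝒜'.trans hTT'⟩))

end Gcc
section Setup
variable {G : SimpleGraph V} {s : Finset V} {v v' : V}

lemma erase_union_erase (hv : v ∈ s) (hne : v ≠ v') :
    s.erase v' ∪ s.erase v = s := by
  ext x
  simp only [Finset.mem_union, Finset.mem_erase]
  constructor
  · rintro (⟨-, h⟩ | ⟨-, h⟩) <;> assumption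
  · intro hx
    by_cases hxv : x = v'
    · exact Or.inr ⟨by rintro rfl; exact hne hxv, hx⟩
    · exact Or.inl ⟨hxv, hx⟩

lemma insert_erase_eq (hv' : v' ∈ s) : insert v' (s.erase v') = s :=
  Finset.insert_erase hv'

lemma sdiff_pair_subset_erase : s \ {v, v'} ⊆ s.erase v := by
  intro x hx
  simp only [Finset.mem_sdiff, Finset.mem_insert, Finset.mem_singleton] at hx
  push_neg at hx
  exact Finset.mem_erase.mpr ⟨hx.2.1, hx.1⟩

lemma sdiff_pair_subset_erase' : s \ {v, v'} ⊆ s.erase v' := by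
  rw [Finset.pair_comm]
  exact sdiff_pair_subset_erase

/-- cover: every vertex of `s` other than `v, v'` lies in some component of `s \ {v,v'}` -/
lemma exists_comp_cover {x : V} (hx : x ∈ s) (hxv : x ≠ v) (hxv' : x ≠ v') :
    ∃ C ∈ gccSet G (s \ {v, v'}), x ∈ C := by
  have hsub : ({x} : Finset V) ⊆ s \ {v, v'} := by
    intro y hy
    rw [Finset.mem_singleton] at hy
    subst hy
    simp [Finset.mem_sdiff, hx, hxv, hxv']
  obtain ⟨K, hK, hxK⟩ := exists_gcc_above (isTube_singleton G x) hsub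
  exact ⟨K, hK, hxK (Finset.mem_singleton_self x)⟩

/-- the shape lemma: a tube inside `s.erase v` containing `v'` and compatible with all
components of `s \ {v,v'}` equals `s.erase v`. -/
lemma shape_lemma (hne : v ≠ v') (ht' : IsTube G (s.erase v))
    {r : Finset V} (hr : IsTube G r) (hrt' : r ⊆ s.erase v) (hv'r : v' ∈ r)
    (hcompat : ∀ C ∈ gccSet G (s \ {v, v'}), Compatible G r C) : r = s.erase v := by
  refine Finset.Subset.antisymm hrt' ?_
  intro y hy
  by_cases hyv' : y = v'
  · exact hyv' ▸ hv'r
  have hyv : y ≠ v := (Finset.mem_erase.mp hy).1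
  have hys : y ∈ s := (Finset.mem_erase.mp hy).2
  obtain ⟨C₀, hC₀, hyC₀⟩ := exists_comp_cover (G := G) hys hyv hyv'
  obtain ⟨hC₀t, hC₀U, hC₀max⟩ := mem_gccSet_iff.mp hC₀
  have hv'C₀ : v' ∉ C₀ := by
    intro h
    have := hC₀U h
    simp [Finset.mem_sdiff] at this
  have hC₀sub : C₀ ⊆ s.erase v := hC₀U.trans sdiff_pair_subset_erase
  rcases hcompat C₀ hC₀ with h | h | ⟨hdisj, hnotube⟩
  · exact absurd (h hv'r) hv'C₀
  · exact h hyC₀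
  · -- derive a contradiction: r ∪ C₀ is a tube
    exfalso
    obtain ⟨x, hxC₀, z, hz, hzC₀, hadj⟩ :=
      exists_crossing_edge_s16 (A := C₀) ht' (hC₀sub hyC₀) (hrt' hv'r) hyC₀ hv'C₀
    have hzv' : z = v' := by
      by_contra hzv'
      have hzv : z ≠ v := (Finset.mem_erase.mp hz).1
      obtain ⟨C₁, hC₁, hzC₁⟩ := exists_comp_cover (G := G) (Finset.mem_erase.mp hz).2 hzv hzv'
      have hC₀C₁ : C₀ ≠ C₁ := fun h => hzC₀ (h ▸ hzC₁)
      exact (gcc_separated hC₀ hC₁ hC₀C₁).2 x hxC₀ z hzC₁ hadj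
    subst hzv'
    exact hnotube (isTube_union_adj hr hC₀t hv'r hxC₀ hadj.symm)

/-- `s.erase v'` and `s.erase v` are incompatible -/
lemma erase_incompat (hs : IsTube G s) (hv : v ∈ s) (hv' : v' ∈ s) (hne : v ≠ v') :
    ¬ Compatible G (s.erase v') (s.erase v) := by
  rintro (h | h | ⟨-, hnotube⟩)
  · exact (Finset.mem_erase.mp (h (Finset.mem_erase.mpr ⟨hne, hv⟩))).1 rfl
  · exact (Finset.mem_erase.mp (h (Finset.mem_erase.mpr ⟨Ne.symm hne, hv'⟩))).1 rfl
  · rw [erase_union_erase hv hne] at hnotube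
    exact hnotube hs

/-- a tube strictly between `s.erase w` and `s` -/
lemma between_erase {w : V} {r : Finset V} (hw : w ∈ s)
    (h1 : s.erase w ⊆ r) (h2 : r ⊆ s) : r = s.erase w ∨ r = s := by
  by_cases hwr : w ∈ r
  · refine Or.inr (Finset.Subset.antisymm h2 ?_)
    have : insert w (s.erase w) ⊆ r := Finset.insert_subset hwr h1
    rwa [Finset.insert_erase hw] at this
  · refine Or.inl (Finset.Subset.antisymm ?_ h1)
    intro x hx
    exact Finset.mem_erase.mpr ⟨fun h => hwr (h ▸ hx), h2 hx⟩

/-- a tube contained in `s` and disjoint from `s.erase w` is `{w}` -/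
lemma eq_singleton_of_disjoint_erase {w : V} {r : Finset V} (hr : r.Nonempty)
    (h2 : r ⊆ s) (hdisj : r ∩ s.erase w = ∅) : r = {w} := by
  rw [Finset.eq_singleton_iff_nonempty_unique_mem]
  refine ⟨hr, fun x hx => ?_⟩
  by_contra hxw
  have : x ∈ r ∩ s.erase w := Finset.mem_inter.mpr ⟨hx, Finset.mem_erase.mpr ⟨hxw, h2 hx⟩⟩
  rw [hdisj] at this
  exact absurd this (Finset.notMem_empty x)

end Setup
section Main
variable {G : SimpleGraph V} {s : Finset V} {v v' : V}

lemma compat_with_t' (hs : IsTube G s) (hv : v ∈ s) (hv' : v' ∈ s) (hne : v ≠ v')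
    (ht : IsTube G (s.erase v')) (ht' : IsTube G (s.erase v))
    {r : Finset V} (hr : IsTube G r)
    (hrs : Compatible G r s) (hrt : Compatible G r (s.erase v'))
    (hcomps : ∀ C ∈ gccSet G (s \ {v, v'}), Compatible G r C)
    (hrne : r ≠ s.erase v') :
    Compatible G r (s.erase v) := by
  have ht'subs : s.erase v ⊆ s := Finset.erase_subset v s
  rcases hrs with hrsub | hsr | ⟨hdisj, hnotube⟩
  · -- r ⊆ s
    rcases hrt with h | h | ⟨hdisj, hnotube⟩
    · -- r ⊆ s.erase v'
      by_cases hvr : v ∈ r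
      · exfalso
        apply hrne
        refine shape_lemma (Ne.symm hne) ht hr h hvr ?_
        intro C hC
        apply hcomps
        rwa [Finset.pair_comm v v']
      · refine Or.inl ?_
        intro x hx
        have hxs := Finset.mem_erase.mp (h hx)
        exact Finset.mem_erase.mpr ⟨fun hxv => hvr (hxv ▸ hx), hxs.2⟩
    · -- s.erase v' ⊆ r
      rcases between_erase hv' h hrsub with heq | heq
      · exact absurd heq hrne
      · exact Or.inr (Or.inl (heq ▸ ht'subs))
    · -- disjoint from s.erase v'
      exfalso
      have hrv' : r = {v'} := eq_singleton_of_disjoint_erase hr.1 hrsub hdisj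
      apply hnotube
      have : r ∪ s.erase v' = s := by
        rw [hrv', ← Finset.insert_eq, Finset.insert_erase hv']
      rw [this]
      exact hs
  · -- s ⊆ r
    exact Or.inr (Or.inl (ht'subs.trans hsr))
  · -- r disjoint from s
    refine Or.inr (Or.inr ⟨?_, ?_⟩)
    · rw [Finset.eq_empty_iff_forall_notMem] at hdisj ⊢
      intro x hx
      rw [Finset.mem_inter] at hx
      exact hdisj x (Finset.mem_inter.mpr ⟨hx.1, ht'subs hx.2⟩)
    · intro htube
      apply hnotube
      have h1 : IsTube G ((r ∪ s.erase v) ∪ s) := by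
        refine isTube_union_of_inter htube hs ⟨v', Finset.mem_inter.mpr ⟨?_, hv'⟩⟩
        exact Finset.mem_union_right _ (Finset.mem_erase.mpr ⟨Ne.symm hne, hv'⟩)
      have h2 : (r ∪ s.erase v) ∪ s = r ∪ s := by
        rw [Finset.union_assoc, Finset.union_eq_right.mpr ht'subs]
      rwa [h2] at h1
end Main
section Construction
variable {G : SimpleGraph V} {s : Finset V} {v v' : V}

lemma exchangeable_of_nondisc (hs : IsTube G s) (hv : v ∈ s) (hv' : v' ∈ s) (hne : v ≠ v')
    (ht : IsTube G (s.erase v')) (ht' : IsTube G (s.erase v)) :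
    ExchangeableT G (s.erase v') (s.erase v) := by
  classical
  set t : Finset V := s.erase v' with htdef
  set t' : Finset V := s.erase v with ht'def
  have hvt : v ∈ t := Finset.mem_erase.mpr ⟨hne, hv⟩
  have hv't' : v' ∈ t' := Finset.mem_erase.mpr ⟨Ne.symm hne, hv'⟩
  have hv'nt : v' ∉ t := fun h => (Finset.mem_erase.mp h).1 rfl
  have hvnt' : v ∉ t' := fun h => (Finset.mem_erase.mp h).1 rfl
  have htne : t ≠ t' := fun h => hvnt' (h ▸ hvt)
  have htnes : t ≠ s := fun h => hv'nt (h ▸ hv')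
  have htsubs : t ⊆ s := Finset.erase_subset v' s
  have ht'subs : t' ⊆ s := Finset.erase_subset v s
  have hincompat : ¬ Compatible G t t' := erase_incompat hs hv hv' hne
  set comps : Finset (Finset V) := gccSet G (s \ {v, v'}) with hcompsdef
  have hcompsub : ∀ C ∈ comps, C ⊆ s \ {v, v'} := fun C hC => (mem_gccSet_iff.mp hC).2.1
  have hcompt : ∀ C ∈ comps, C ⊆ t := fun C hC => (hcompsub C hC).trans sdiff_pair_subset_erase'
  have hcompt' : ∀ C ∈ comps, C ⊆ t' := fun C hC => (hcompsub C hC).trans sdiff_pair_subset_erase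
  have hcomptube : ∀ C ∈ comps, IsTube G C := fun C hC => (mem_gccSet_iff.mp hC).1
  -- base family
  set B : Finset (Finset V) := insert s (insert t comps) with hBdef
  have hmemB : ∀ {A}, A ∈ B ↔ A = s ∨ A = t ∨ A ∈ comps := by
    intro A
    simp [hBdef, Finset.mem_insert]
  have hBtubes : ∀ A ∈ B, IsTube G A := by
    intro A hA
    rcases hmemB.mp hA with rfl | rfl | h
    · exact hs
    · exact ht
    · exact hcomptube A h
  have hBcompat : ∀ A ∈ B, ∀ A' ∈ B, Compatible G A A' := by
    intro A hA A' hA'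
    rcases hmemB.mp hA with rfl | rfl | h <;> rcases hmemB.mp hA' with rfl | rfl | h'
    · exact compat_refl _
    · exact Or.inr (Or.inl htsubs)
    · exact Or.inr (Or.inl ((hcompt A' h').trans htsubs))
    · exact Or.inl htsubs
    · exact compat_refl _
    · exact Or.inr (Or.inl (hcompt A' h'))
    · exact Or.inl ((hcompt A h).trans htsubs)
    · exact Or.inl (hcompt A h)
    · by_cases hAA' : A = A'
      · exact hAA' ▸ compat_refl _
      · exact compat_of_subsets_gcc (hcomptube A h) (hcomptube A' h')
          (Finset.Subset.refl A) (Finset.Subset.refl A') h h' hAA'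
  obtain ⟨T, hTmax, hBT⟩ := exists_maxTubing_extending hBtubes hBcompat
  have hsT : s ∈ T := hBT (hmemB.mpr (Or.inl rfl))
  have htT : t ∈ T := hBT (hmemB.mpr (Or.inr (Or.inl rfl)))
  have hcompsT : ∀ C ∈ comps, C ∈ T := fun C hC => hBT (hmemB.mpr (Or.inr (Or.inr hC)))
  have ht'nT : t' ∉ T := fun h => hincompat (hTmax.1.2.1 t htT t' h)
  set R : Finset (Finset V) := T.erase t with hRdef
  set T' : Finset (Finset V) := insert t' R with hT'def
  have hsR : s ∈ R := Finset.mem_erase.mpr ⟨Ne.symm htnes, hsT⟩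
  have hcompsR : ∀ C ∈ comps, C ∈ R := by
    intro C hC
    refine Finset.mem_erase.mpr ⟨?_, hcompsT C hC⟩
    intro hCt
    have : v ∈ s \ {v, v'} := hcompsub C hC (hCt ▸ hvt)
    simp [Finset.mem_sdiff] at this
  have hRfacts : ∀ r ∈ R, r ∈ T ∧ r ≠ t := fun r hr =>
    ⟨Finset.mem_of_mem_erase hr, Finset.ne_of_mem_erase hr⟩
  -- every element of R is compatible with t'
  have hRt' : ∀ r ∈ R, Compatible G r t' := by
    intro r hr
    obtain ⟨hrT, hrnet⟩ := hRfacts r hr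
    exact compat_with_t' hs hv hv' hne ht ht' (hTmax.1.1 r hrT)
      (hTmax.1.2.1 r hrT s hsT) (hTmax.1.2.1 r hrT t htT)
      (fun C hC => hTmax.1.2.1 r hrT C (hcompsT C hC)) hrnet
  -- T' is a tubing
  have hT'tubing : IsTubing G T' := by
    refine ⟨?_, ?_, ?_⟩
    · intro a ha
      rcases Finset.mem_insert.mp ha with rfl | ha
      · exact ht'
      · exact hTmax.1.1 a (hRfacts a ha).1
    · intro a ha b hb
      rcases Finset.mem_insert.mp ha with rfl | ha <;>
        rcases Finset.mem_insert.mp hb with rfl | hb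
      · exact compat_refl _
      · exact compat_symm (hRt' b hb)
      · exact hRt' a ha
      · exact hTmax.1.2.1 a (hRfacts a ha).1 b (hRfacts b hb).1
    · intro K hK hKmax
      have hKT : K ∈ T := hTmax.1.2.2 K hK hKmax
      have hKnet : K ≠ t := by
        rintro rfl
        exact htnes (hKmax s hs htsubs)
      exact Finset.mem_insert_of_mem (Finset.mem_erase.mpr ⟨hKnet, hKT⟩)
  -- T' is maximal
  have hT'max : IsMaxTubing G T' := by
    refine ⟨hT'tubing, ?_⟩
    intro T'' hT'' hsub
    refine Finset.Subset.antisymm hsub ?_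
    intro r hr
    have hrtube : IsTube G r := hT''.1 r hr
    have hcompat : ∀ a ∈ T', Compatible G r a := fun a ha => hT''.2.1 r hr a (hsub ha)
    have ht'T' : t' ∈ T' := Finset.mem_insert_self t' R
    by_cases hrt' : r = t'
    · exact hrt' ▸ ht'T'
    -- r is compatible with t
    have hrt : Compatible G r t := by
      refine compat_with_t' (v := v') (v' := v) hs hv' hv (Ne.symm hne) ht' ht hrtube
        (hcompat s (Finset.mem_insert_of_mem hsR)) (hcompat t' ht'T') ?_ hrt'
      intro C hC
      rw [Finset.pair_comm v' v] at hC
      exact hcompat C (Finset.mem_insert_of_mem (hcompsR C hC))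
    -- insert r T is a tubing
    have hins : IsTubing G (insert r T) := by
      refine ⟨?_, ?_, ?_⟩
      · intro a ha
        rcases Finset.mem_insert.mp ha with rfl | ha
        · exact hrtube
        · exact hTmax.1.1 a ha
      · intro a ha b hb
        have key : ∀ q ∈ T, Compatible G r q := by
          intro q hq
          by_cases hqt : q = t
          · exact hqt ▸ hrt
          · exact hcompat q (Finset.mem_insert_of_mem (Finset.mem_erase.mpr ⟨hqt, hq⟩))
        rcases Finset.mem_insert.mp ha with ha' | ha'
        · rcases Finset.mem_insert.mp hb with hb' | hb'
          · rw [ha', hb']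
            exact compat_refl _
          · rw [ha']
            exact key b hb'
        · rcases Finset.mem_insert.mp hb with hb' | hb'
          · rw [hb']
            exact compat_symm (key a ha')
          · exact hTmax.1.2.1 a ha' b hb'
      · intro K hK hKmax
        exact Finset.mem_insert_of_mem (hTmax.1.2.2 K hK hKmax)
    have hTeq : T = insert r T := hTmax.2 (insert r T) hins (Finset.subset_insert r T)
    have hrT : r ∈ T := by
      rw [hTeq]
      exact Finset.mem_insert_self r T
    by_cases hrteq : r = t
    · exfalso
      apply hincompat
      refine hT''.2.1 t ?_ t' (hsub ht'T')
      rw [← hrteq]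
      exact hr
    · exact Finset.mem_insert_of_mem (Finset.mem_erase.mpr ⟨hrteq, hrT⟩)
  -- conclude
  refine ⟨htne, T, T', hTmax, hT'max, htT, Finset.mem_insert_self t' R, ?_⟩
  have ht'nR : t' ∉ R := fun h => ht'nT (hRfacts t' h).1
  rw [hT'def, Finset.erase_insert ht'nR]

end Construction

theorem stmt16 (G : SimpleGraph V) (t t' : Finset V)
    (ht : IsTube G t) (ht' : IsTube G t') :
    MaxExchPair G t t' ↔
      ∃ s v v', IsTube G s ∧ v ∈ s ∧ v' ∈ s ∧ v ≠ v' ∧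
        NonDisc G s v ∧ NonDisc G s v' ∧ t = s.erase v' ∧ t' = s.erase v := by
  constructor
  · rintro ⟨⟨hne, -⟩, v, v', htdiff, ht'diff, ⟨hvnt', -⟩, ⟨hv'nt, hv'adj⟩⟩
    have hvt : v ∈ t := by
      have : v ∈ t \ t' := htdiff ▸ Finset.mem_singleton_self v
      exact (Finset.mem_sdiff.mp this).1
    have hv't' : v' ∈ t' := by
      have : v' ∈ t' \ t := ht'diff ▸ Finset.mem_singleton_self v'
      exact (Finset.mem_sdiff.mp this).1
    have hvv' : v ≠ v' := fun h => hvnt' (h ▸ hv't')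
    -- an edge between t and t'
    obtain ⟨y, hyt, hadjv'y⟩ := hv'adj
    have hstube : IsTube G (t ∪ t') := isTube_union_adj ht ht' hyt hv't' hadjv'y.symm
    have hsv' : (t ∪ t').erase v' = t := by
      ext x
      simp only [Finset.mem_erase, Finset.mem_union]
      constructor
      · rintro ⟨hxv', hx | hx⟩
        · exact hx
        · by_contra hxt
          have : x ∈ t' \ t := Finset.mem_sdiff.mpr ⟨hx, hxt⟩
          rw [ht'diff, Finset.mem_singleton] at this
          exact hxv' this
      · intro hx
        exact ⟨fun h => hv'nt (h ▸ hx), Or.inl hx⟩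
    have hsv : (t ∪ t').erase v = t' := by
      ext x
      simp only [Finset.mem_erase, Finset.mem_union]
      constructor
      · rintro ⟨hxv, hx | hx⟩
        · by_contra hxt'
          have : x ∈ t \ t' := Finset.mem_sdiff.mpr ⟨hx, hxt'⟩
          rw [htdiff, Finset.mem_singleton] at this
          exact hxv this
        · exact hx
      · intro hx
        exact ⟨fun h => hvnt' (h ▸ hx), Or.inr hx⟩
    refine ⟨t ∪ t', v, v', hstube, Finset.mem_union_left _ hvt,
      Finset.mem_union_right _ hv't', hvv', ?_, ?_, hsv'.symm, hsv.symm⟩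
    · exact ⟨Finset.mem_union_left _ hvt, Or.inr (by rw [hsv]; exact ht')⟩
    · exact ⟨Finset.mem_union_right _ hv't', Or.inr (by rw [hsv']; exact ht)⟩
  · rintro ⟨s, v, v', hs, hv, hv', hne, -, -, rfl, rfl⟩
    refine ⟨exchangeable_of_nondisc hs hv hv' hne ht ht', v, v', ?_, ?_, ?_, ?_⟩
    · -- (s.erase v') \ (s.erase v) = {v}
      ext x
      simp only [Finset.mem_sdiff, Finset.mem_erase, Finset.mem_singleton]
      constructor
      · rintro ⟨⟨hxv', hxs⟩, h⟩
        by_contra hxv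
        exact h ⟨hxv, hxs⟩
      · rintro rfl
        exact ⟨⟨hne, hv⟩, fun h => h.1 rfl⟩
    · ext x
      simp only [Finset.mem_sdiff, Finset.mem_erase, Finset.mem_singleton]
      constructor
      · rintro ⟨⟨hxv, hxs⟩, h⟩
        by_contra hxv'
        exact h ⟨hxv', hxs⟩
      · rintro rfl
        exact ⟨⟨Ne.symm hne, hv'⟩, fun h => h.1 rfl⟩
    · refine ⟨fun h => (Finset.mem_erase.mp h).1 rfl, ?_⟩
      obtain ⟨x, hxs, hxv, hadj⟩ := exists_adj_of_mem_tube hs hv hv' (Ne.symm hne)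
      exact ⟨x, Finset.mem_erase.mpr ⟨hxv, hxs⟩, hadj⟩
    · refine ⟨fun h => (Finset.mem_erase.mp h).1 rfl, ?_⟩
      obtain ⟨x, hxs, hxv', hadj⟩ := exists_adj_of_mem_tube hs hv' hv hne
      exact ⟨x, Finset.mem_erase.mpr ⟨hxv', hxs⟩, hadj⟩
end

section
/- Let G be a graph on vertex set V. Every tube t of G with |t| ≥ 2 has at least two non-disconnecting vertices, with exactly two if and only if the induced subgraph on t is a path. Consequently, the number of maximal exchangeable pairs Σ_{t ∈ T(G)} C(nd(t), 2) (where nd(t) is the number of non-disconnecting vertices of t) equals |T(G)| − |V| if and only if G is a disjoint union of paths, and is strictly greater otherwise. -/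
open scoped Classical

variable {V : Type*} [Fintype V] [DecidableEq V]

/-- The induced subgraph on `t` is a path: there is a duplicate-free enumeration of `t`
such that two vertices of `t` are adjacent iff they are consecutive in the enumeration. -/
def InducedIsPath (G : SimpleGraph V) (t : Finset V) : Prop :=
  ∃ l : List V, l.Nodup ∧ l.toFinset = t ∧
    ∀ u ∈ t, ∀ w ∈ t, (G.Adj u w ↔
      ((∃ k, l[k]? = some u ∧ l[k+1]? = some w) ∨
       (∃ k, l[k]? = some w ∧ l[k+1]? = some u)))

/-- The number of non-disconnecting vertices of `t`. -/
noncomputable def ndCount (G : SimpleGraph V) (t : Finset V) : ℕ :=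
  (t.filter (fun w => NonDisc G t w)).card

/-- `G` is a disjoint union of paths: every connected component (maximal tube) is a path. -/
def DisjointUnionOfPaths (G : SimpleGraph V) : Prop :=
  ∀ K : Finset V, IsTube G K → (∀ C : Finset V, IsTube G C → K ⊆ C → K = C) →
    InducedIsPath G K

set_option linter.unusedSectionVars false

section Aux

def ReachIn (G : SimpleGraph V) (t : Finset V) : V → V → Prop :=
  Relation.ReflTransGen (fun x y => y ∈ t ∧ G.Adj x y)

lemma reachIn_mem {G : SimpleGraph V} {t : Finset V} {x y : V} (hx : x ∈ t)
    (h : ReachIn G t x y) : y ∈ t := by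
  induction h with
  | refl => exact hx
  | tail _ h2 _ => exact h2.1

lemma reachIn_mono {G : SimpleGraph V} {t s : Finset V} (hts : t ⊆ s) {x y : V}
    (h : ReachIn G t x y) : ReachIn G s x y := by
  induction h with
  | refl => exact .refl
  | tail _ h2 ih => exact ih.tail ⟨hts h2.1, h2.2⟩

lemma reachIn_symm {G : SimpleGraph V} {t : Finset V} {x y : V} (hx : x ∈ t)
    (h : ReachIn G t x y) : ReachIn G t y x := by
  induction h with
  | refl => exact .refl
  | tail h1 h2 ih =>
    exact Relation.ReflTransGen.trans (.single ⟨reachIn_mem hx h1, h2.2.symm⟩) ih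

lemma reachIn_exists_subtype {G : SimpleGraph V} {t : Finset V} {x y : V} (hx : x ∈ t)
    (h : ReachIn G t x y) :
    ∃ hy : y ∈ t, (G.induce (t : Set V)).Reachable ⟨x, hx⟩ ⟨y, hy⟩ := by
  induction h with
  | refl => exact ⟨hx, .refl _⟩
  | tail h1 h2 ih =>
    obtain ⟨hb, hr⟩ := ih
    refine ⟨h2.1, hr.trans (SimpleGraph.Adj.reachable ?_)⟩
    simp only [SimpleGraph.comap_adj]
    exact h2.2

lemma walk_reachIn {G : SimpleGraph V} {t : Finset V} {u v : (t : Set V)}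
    (w : (G.induce (t : Set V)).Walk u v) : ReachIn G t u.val v.val := by
  induction w with
  | nil => exact .refl
  | @cons a b c hadj p ih =>
    exact Relation.ReflTransGen.head ⟨b.2, hadj⟩ ih

lemma isTube_iff {G : SimpleGraph V} {t : Finset V} :
    IsTube G t ↔ t.Nonempty ∧ ∀ x ∈ t, ∀ y ∈ t, ReachIn G t x y := by
  constructor
  · rintro ⟨hne, hc⟩
    refine ⟨hne, fun x hx y hy => ?_⟩
    obtain ⟨w⟩ := hc.preconnected ⟨x, hx⟩ ⟨y, hy⟩
    exact walk_reachIn w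
  · rintro ⟨hne, hr⟩
    have : Nonempty (t : Set V) := ⟨⟨hne.choose, hne.choose_spec⟩⟩
    refine ⟨hne, ⟨?_⟩⟩
    rintro ⟨x, hx⟩ ⟨y, hy⟩
    obtain ⟨hy', hrr⟩ := reachIn_exists_subtype hx (hr x hx y hy)
    exact hrr

lemma singleton_tube (G : SimpleGraph V) (v : V) : IsTube G {v} := by
  rw [isTube_iff]
  refine ⟨⟨v, Finset.mem_singleton_self v⟩, fun x hx y hy => ?_⟩
  simp only [Finset.mem_singleton] at hx hy
  subst hx; subst hy; exact .refl

lemma insert_tube {G : SimpleGraph V} {s : Finset V} {u x : V} (hs : IsTube G s)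
    (hx : x ∈ s) (hadj : G.Adj u x) : IsTube G (insert u s) := by
  rw [isTube_iff] at hs ⊢
  obtain ⟨hne, hr⟩ := hs
  have hsub : s ⊆ insert u s := Finset.subset_insert u s
  have key : ∀ y ∈ insert u s, ReachIn G (insert u s) x y := by
    intro y hy
    rcases Finset.mem_insert.mp hy with rfl | hy
    · exact .single ⟨Finset.mem_insert_self _ _, hadj.symm⟩
    · exact reachIn_mono hsub (hr x hx y hy)
  refine ⟨⟨x, hsub hx⟩, fun a ha b hb => ?_⟩
  exact (reachIn_symm (hsub hx) (key a ha)).trans (key b hb)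

lemma crossing {G : SimpleGraph V} {t s : Finset V} (ht : IsTube G t) (hst : s ⊆ t)
    (hne : s.Nonempty) (hne2 : ¬ t ⊆ s) :
    ∃ u x, u ∈ t ∧ u ∉ s ∧ x ∈ s ∧ G.Adj u x := by
  obtain ⟨a, ha⟩ := hne
  obtain ⟨b, hb, hbs⟩ := Finset.not_subset.mp hne2
  have hr : ReachIn G t a b := (isTube_iff.mp ht).2 a (hst ha) b hb
  clear hne2
  -- find crossing pair along the chain
  have : ∀ y, ReachIn G t a y → y ∉ s → ∃ u x, u ∈ t ∧ u ∉ s ∧ x ∈ s ∧ G.Adj u x := by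
    intro y hy
    induction hy with
    | refl => intro h; exact absurd ha h
    | @tail b c h1 h2 ih =>
      intro hc
      by_cases hbs' : b ∈ s
      · exact ⟨c, b, h2.1, hc, hbs', h2.2.symm⟩
      · exact ih hbs'
  exact this b hr hbs

lemma exists_nonDisc {G : SimpleGraph V} {t : Finset V} (ht : IsTube G t)
    (hcard : 2 ≤ t.card) : ∃ u ∈ t, IsTube G (t.erase u) := by
  classical
  -- maximal proper subtube
  obtain ⟨a, ha⟩ := ht.1
  set S := (t.powerset.filter (fun s => s ≠ t ∧ IsTube G s)) with hS
  have hSne : S.Nonempty := by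
    refine ⟨{a}, ?_⟩
    simp only [hS, Finset.mem_filter, Finset.mem_powerset]
    refine ⟨Finset.singleton_subset_iff.mpr ha, ?_, singleton_tube G a⟩
    intro h
    rw [← h] at hcard
    simp at hcard
  obtain ⟨s, hsS, hmax⟩ := S.exists_max_image Finset.card hSne
  simp only [hS, Finset.mem_filter, Finset.mem_powerset] at hsS
  obtain ⟨hst, hsne, hstube⟩ := hsS
  obtain ⟨u, x, hut, hus, hxs, hadj⟩ := crossing ht hst hstube.1
    (fun h => hsne (Finset.Subset.antisymm hst h))
  have hins : IsTube G (insert u s) := insert_tube hstube hxs hadj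
  have hinssub : insert u s ⊆ t := Finset.insert_subset hut hst
  have heq : insert u s = t := by
    by_contra hne'
    have : insert u s ∈ S := by
      simp only [hS, Finset.mem_filter, Finset.mem_powerset]
      exact ⟨hinssub, hne', hins⟩
    have := hmax _ this
    rw [Finset.card_insert_of_notMem hus] at this
    omega
  refine ⟨u, hut, ?_⟩
  have : t.erase u = s := by
    rw [← heq, Finset.erase_insert hus]
  rw [this]; exact hstube

def Consec (l : List V) (u w : V) : Prop := ∃ k, l[k]? = some u ∧ l[k+1]? = some w

def IsPathList (G : SimpleGraph V) (t : Finset V) (l : List V) : Prop :=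
  l.Nodup ∧ l.toFinset = t ∧ ∀ u ∈ t, ∀ w ∈ t, (G.Adj u w ↔ (Consec l u w ∨ Consec l w u))

lemma consec_mem_left {l : List V} {u w : V} (h : Consec l u w) : u ∈ l := by
  obtain ⟨k, h1, _⟩ := h
  obtain ⟨hk, he⟩ := List.getElem?_eq_some_iff.mp h1
  exact he ▸ List.getElem_mem hk

lemma consec_mem_right {l : List V} {u w : V} (h : Consec l u w) : w ∈ l := by
  obtain ⟨k, _, h2⟩ := h
  obtain ⟨hk, he⟩ := List.getElem?_eq_some_iff.mp h2
  exact he ▸ List.getElem_mem hk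

lemma consec_cons {a : V} {l : List V} {u w : V} :
    Consec (a :: l) u w ↔ (u = a ∧ l[0]? = some w) ∨ Consec l u w := by
  constructor
  · rintro ⟨k, h1, h2⟩
    cases k with
    | zero =>
      left
      simp only [List.getElem?_cons_zero, Option.some.injEq] at h1
      exact ⟨h1.symm, by simpa using h2⟩
    | succ k =>
      right
      exact ⟨k, by simpa using h1, by simpa using h2⟩
  · rintro (⟨rfl, h⟩ | ⟨k, h1, h2⟩)
    · exact ⟨0, by simp, by simpa using h⟩
    · exact ⟨k + 1, by simpa using h1, by simpa using h2⟩

lemma consec_reverse {l : List V} {u w : V} :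
    Consec l.reverse u w ↔ Consec l w u := by
  have key : ∀ (m : List V) (u w : V), Consec m.reverse u w → Consec m w u := by
    intro m u w ⟨k, h1, h2⟩
    obtain ⟨hk, he1⟩ := List.getElem?_eq_some_iff.mp h1
    obtain ⟨hk2, he2⟩ := List.getElem?_eq_some_iff.mp h2
    rw [List.length_reverse] at hk hk2
    rw [List.getElem_reverse] at he1 he2
    refine ⟨m.length - 1 - (k+1), List.getElem?_eq_some_iff.mpr ⟨by omega, he2⟩,
      List.getElem?_eq_some_iff.mpr ⟨by omega, ?_⟩⟩
    convert he1 using 2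
    omega
  constructor
  · exact key l u w
  · intro h
    exact key l.reverse w u (by simpa using h)

lemma isPathList_reverse {G : SimpleGraph V} {t : Finset V} {l : List V}
    (h : IsPathList G t l) : IsPathList G t l.reverse := by
  obtain ⟨hnd, hfin, hadj⟩ := h
  refine ⟨List.nodup_reverse.mpr hnd, by simpa using hfin, fun u hu w hw => ?_⟩
  rw [hadj u hu w hw, consec_reverse, consec_reverse]
  exact Or.comm

lemma isPathList_mem {G : SimpleGraph V} {t : Finset V} {l : List V}
    (h : IsPathList G t l) {v : V} : v ∈ t ↔ v ∈ l := by
  rw [← h.2.1, List.mem_toFinset]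

lemma isPathList_adj_consec {G : SimpleGraph V} {t : Finset V} {l : List V}
    (h : IsPathList G t l) {k : ℕ} (hk : k + 1 < l.length) :
    G.Adj (l[k]'(by omega)) (l[k+1]'hk) := by
  have h1 : l[k]'(by omega) ∈ t := (isPathList_mem h).mpr (List.getElem_mem _)
  have h2 : l[k+1]'hk ∈ t := (isPathList_mem h).mpr (List.getElem_mem _)
  rw [h.2.2 _ h1 _ h2]
  exact Or.inl ⟨k, List.getElem?_eq_some_iff.mpr ⟨by omega, rfl⟩, List.getElem?_eq_some_iff.mpr ⟨hk, rfl⟩⟩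

lemma isPathList_adj_idx {G : SimpleGraph V} {t : Finset V} {l : List V}
    (h : IsPathList G t l) {u w : V} {i j : ℕ} (hi : i < l.length) (hj : j < l.length)
    (hui : l[i] = u) (hwj : l[j] = w) (hadj : G.Adj u w) : j = i + 1 ∨ i = j + 1 := by
  have hu : u ∈ t := (isPathList_mem h).mpr (hui ▸ List.getElem_mem hi)
  have hw : w ∈ t := (isPathList_mem h).mpr (hwj ▸ List.getElem_mem hj)
  rcases (h.2.2 u hu w hw).mp hadj with ⟨k, h1, h2⟩ | ⟨k, h1, h2⟩
  · obtain ⟨hk, he1⟩ := List.getElem?_eq_some_iff.mp h1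
    obtain ⟨hk2, he2⟩ := List.getElem?_eq_some_iff.mp h2
    have : k = i := h.1.getElem_inj_iff.mp (he1.trans hui.symm)
    have : k + 1 = j := h.1.getElem_inj_iff.mp (he2.trans hwj.symm)
    omega
  · obtain ⟨hk, he1⟩ := List.getElem?_eq_some_iff.mp h1
    obtain ⟨hk2, he2⟩ := List.getElem?_eq_some_iff.mp h2
    have : k = j := h.1.getElem_inj_iff.mp (he1.trans hwj.symm)
    have : k + 1 = i := h.1.getElem_inj_iff.mp (he2.trans hui.symm)
    omega

lemma isPathList_tube {G : SimpleGraph V} {t : Finset V} {l : List V}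
    (h : IsPathList G t l) (hne : l ≠ []) : IsTube G t := by
  have hlen : 0 < l.length := List.length_pos_iff.mpr hne
  have key : ∀ i, (hi : i < l.length) → ReachIn G t (l[0]'hlen) (l[i]'hi) := by
    intro i
    induction i with
    | zero => intro _; exact .refl
    | succ k ih =>
      intro hi
      exact (ih (by omega)).tail ⟨(isPathList_mem h).mpr (List.getElem_mem hi),
        isPathList_adj_consec h hi⟩
  rw [isTube_iff]
  refine ⟨⟨l[0]'hlen, (isPathList_mem h).mpr (List.getElem_mem hlen)⟩, fun x hx y hy => ?_⟩
  obtain ⟨i, hi, hix⟩ := List.mem_iff_getElem.mp ((isPathList_mem h).mp hx)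
  obtain ⟨j, hj, hjy⟩ := List.mem_iff_getElem.mp ((isPathList_mem h).mp hy)
  have h0 : l[0]'hlen ∈ t := (isPathList_mem h).mpr (List.getElem_mem hlen)
  exact (reachIn_symm h0 (hix ▸ key i hi)).trans (hjy ▸ key j hj)

lemma isPathList_erase_head {G : SimpleGraph V} {t : Finset V} {a : V} {l : List V}
    (h : IsPathList G t (a :: l)) : IsPathList G (t.erase a) l := by
  obtain ⟨hnd, hfin, hadj⟩ := h
  have hal : a ∉ l := (List.nodup_cons.mp hnd).1
  refine ⟨(List.nodup_cons.mp hnd).2, ?_, ?_⟩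
  · rw [← hfin]
    simp only [List.toFinset_cons]
    rw [Finset.erase_insert (by simpa using hal)]
  · intro u hu w hw
    have hu' : u ∈ t := Finset.mem_of_mem_erase hu
    have hw' : w ∈ t := Finset.mem_of_mem_erase hw
    have hua : u ≠ a := Finset.ne_of_mem_erase hu
    have hwa : w ≠ a := Finset.ne_of_mem_erase hw
    rw [hadj u hu' w hw', consec_cons, consec_cons]
    constructor
    · rintro ((⟨h1, _⟩ | h1) | (⟨h1, _⟩ | h1))
      · exact absurd h1 hua
      · exact Or.inl h1
      · exact absurd h1 hwa
      · exact Or.inr h1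
    · rintro (h1 | h1)
      · exact Or.inl (Or.inr h1)
      · exact Or.inr (Or.inr h1)

lemma isPathList_cons {G : SimpleGraph V} {s : Finset V} {l : List V} {a : V}
    (h : IsPathList G s l) (hlne : l ≠ []) (ha : a ∉ s)
    (hadj0 : G.Adj a (l[0]'(List.length_pos_iff.mpr hlne)))
    (honly : ∀ x ∈ s, G.Adj a x → x = l[0]'(List.length_pos_iff.mpr hlne)) :
    IsPathList G (insert a s) (a :: l) := by
  obtain ⟨hnd, hfin, hadjiff⟩ := h
  have hlen : 0 < l.length := List.length_pos_iff.mpr hlne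
  have hal : a ∉ l := fun hc => ha ((isPathList_mem ⟨hnd, hfin, hadjiff⟩).mpr hc)
  have he0 : l[0]'hlen ∈ s := (isPathList_mem ⟨hnd, hfin, hadjiff⟩).mpr (List.getElem_mem hlen)
  refine ⟨List.nodup_cons.mpr ⟨hal, hnd⟩, by rw [List.toFinset_cons, hfin], ?_⟩
  have notconsec_xa : ∀ x : V, ¬ Consec (a :: l) x a := by
    rintro x ⟨k, h1, h2⟩
    obtain ⟨hk, he⟩ := List.getElem?_eq_some_iff.mp h2
    rcases Nat.eq_zero_or_pos (k+1) with h' | h'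
    · omega
    · have : a ∈ l := by
        have : (a :: l)[k+1]'hk = l[k]'(by simpa using hk) := by simp
        rw [this] at he
        exact he ▸ List.getElem_mem _
      exact hal this
  intro u hu w hw
  rcases Finset.mem_insert.mp hu with rfl | hus
  · rcases Finset.mem_insert.mp hw with rfl | hws
    · simp only [SimpleGraph.irrefl, false_iff]
      rintro (h1 | h1) <;> exact notconsec_xa _ h1
    · constructor
      · intro hadj
        have := honly w hws hadj
        refine Or.inl ⟨0, by simp, ?_⟩
        simp only [List.getElem?_cons_succ]
        exact List.getElem?_eq_some_iff.mpr ⟨hlen, this.symm⟩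
      · rintro (h1 | h1)
        · rcases consec_cons.mp h1 with ⟨_, h2⟩ | h2
          · obtain ⟨hk, he⟩ := List.getElem?_eq_some_iff.mp h2
            exact he ▸ hadj0
          · exact absurd (consec_mem_left h2) hal
        · exact (notconsec_xa w h1).elim
  · rcases Finset.mem_insert.mp hw with rfl | hws
    · rw [G.adj_comm]
      constructor
      · intro hadj
        have := honly u hus hadj
        refine Or.inr ⟨0, by simp, ?_⟩
        simp only [List.getElem?_cons_succ]
        exact List.getElem?_eq_some_iff.mpr ⟨hlen, this.symm⟩
      · rintro (h1 | h1)
        · exact (notconsec_xa u h1).elim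
        · rcases consec_cons.mp h1 with ⟨_, h2⟩ | h2
          · obtain ⟨hk, he⟩ := List.getElem?_eq_some_iff.mp h2
            exact he ▸ hadj0
          · exact absurd (consec_mem_left h2) hal
    · rw [hadjiff u hus w hws, consec_cons, consec_cons]
      have hua : u ≠ a := fun h => ha (h ▸ hus)
      have hwa : w ≠ a := fun h => ha (h ▸ hws)
      constructor
      · rintro (h1 | h1)
        · exact Or.inl (Or.inr h1)
        · exact Or.inr (Or.inr h1)
      · rintro ((⟨h1, _⟩ | h1) | (⟨h1, _⟩ | h1))
        · exact absurd h1 hua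
        · exact Or.inl h1
        · exact absurd h1 hwa
        · exact Or.inr h1

lemma reach_stay_lt {G : SimpleGraph V} {t : Finset V} {l : List V}
    (hp : IsPathList G t l) {s : Finset V} (hs : s ⊆ t) {m : ℕ} (hm : m < l.length)
    (havoid : l[m] ∉ s) {a b : V} (ha : a ∈ s) (h : ReachIn G s a b) {i : ℕ}
    (hi : i < l.length) (hia : l[i] = a) (him : i < m) :
    ∀ j, (hj : j < l.length) → l[j] = b → j < m := by
  induction h with
  | refl =>
    intro j hj hjb
    have : j = i := hp.1.getElem_inj_iff.mp (hjb.trans hia.symm)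
    omega
  | @tail b' c h1 h2 ih =>
    intro j hj hjc
    have hb's : b' ∈ s := reachIn_mem ha h1
    obtain ⟨i', hi', hib'⟩ := List.mem_iff_getElem.mp ((isPathList_mem hp).mp (hs hb's))
    have hi'm : i' < m := ih i' hi' hib'
    have hstep := isPathList_adj_idx hp hi' hj hib' hjc h2.2
    have hjm : j ≠ m := by
      rintro rfl
      exact havoid (hjc ▸ h2.1)
    omega

lemma inducedIsPath_iff {G : SimpleGraph V} {t : Finset V} :
    InducedIsPath G t ↔ ∃ l, IsPathList G t l := Iff.rfl

lemma isPathList_length {G : SimpleGraph V} {t : Finset V} {l : List V}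
    (hp : IsPathList G t l) : l.length = t.card := by
  rw [← hp.2.1, List.toFinset_card_of_nodup hp.1]

lemma path_head_nonDisc {G : SimpleGraph V} {t : Finset V} {l : List V}
    (hp : IsPathList G t l) (h2 : 2 ≤ t.card) :
    NonDisc G t (l[0]'(by rw [isPathList_length hp]; omega)) := by
  have hlen : 2 ≤ l.length := by rw [isPathList_length hp]; omega
  obtain ⟨a, rest, rfl⟩ := List.exists_cons_of_ne_nil (by
    intro h; rw [h] at hlen; simp at hlen : l ≠ [])
  refine ⟨(isPathList_mem hp).mpr (List.getElem_mem (by omega)), Or.inr ?_⟩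
  have hrest : IsPathList G (t.erase a) rest := isPathList_erase_head hp
  have : rest ≠ [] := by
    intro h
    rw [h] at hlen; simp at hlen
  simpa using isPathList_tube hrest this

lemma path_nonDisc_iff {G : SimpleGraph V} {t : Finset V} {l : List V}
    (hp : IsPathList G t l) (h2 : 2 ≤ t.card) (w : V) (hw : w ∈ t) :
    NonDisc G t w ↔ w = l[0]'(by rw [isPathList_length hp]; omega) ∨
      w = l[l.length - 1]'(by rw [isPathList_length hp]; omega) := by
  have hlen : 2 ≤ l.length := by rw [isPathList_length hp]; omega
  constructor
  · intro hnd
    by_contra hcon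
    push_neg at hcon
    obtain ⟨hw0, hwlast⟩ := hcon
    obtain ⟨m, hm, hmw⟩ := List.mem_iff_getElem.mp ((isPathList_mem hp).mp hw)
    have hm0 : m ≠ 0 := by rintro rfl; exact hw0 hmw.symm
    have hmlast : m ≠ l.length - 1 := by rintro rfl; exact hwlast hmw.symm
    -- t.erase w is nonempty and hence a tube by hnd
    have h0w : l[0]'(by omega) ≠ w := by
      intro h
      exact hm0 (hp.1.getElem_inj_iff.mp (h.trans hmw.symm)).symm
    have hlw : l[l.length - 1]'(by omega) ≠ w := by
      intro h
      exact hmlast (hp.1.getElem_inj_iff.mp (h.trans hmw.symm)).symm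
    have h0mem : l[0]'(by omega) ∈ t.erase w :=
      Finset.mem_erase.mpr ⟨h0w, (isPathList_mem hp).mpr (List.getElem_mem _)⟩
    have hlmem : l[l.length - 1]'(by omega) ∈ t.erase w :=
      Finset.mem_erase.mpr ⟨hlw, (isPathList_mem hp).mpr (List.getElem_mem _)⟩
    have htube : IsTube G (t.erase w) := by
      rcases hnd.2 with h | h
      · rw [h] at h0mem; simp at h0mem
      · exact h
    have hreach : ReachIn G (t.erase w) (l[0]'(by omega)) (l[l.length - 1]'(by omega)) :=
      (isTube_iff.mp htube).2 _ h0mem _ hlmem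
    have := reach_stay_lt hp (Finset.erase_subset w t) hm
      (by rw [hmw]; simp) h0mem hreach (by omega : 0 < l.length) rfl (by omega)
      (l.length - 1) (by omega) rfl
    omega
  · rintro (rfl | rfl)
    · exact path_head_nonDisc hp h2
    · have hp' := isPathList_reverse hp
      have h0 : l.reverse[0]'(by rw [List.length_reverse]; omega) = l[l.length - 1]'(by omega) := by
        rw [List.getElem_reverse]
        simp
      have := path_head_nonDisc hp' h2
      rwa [h0] at this

lemma ndCount_path {G : SimpleGraph V} {t : Finset V} {l : List V}
    (hp : IsPathList G t l) (h2 : 2 ≤ t.card) : ndCount G t = 2 := by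
  have hlen : 2 ≤ l.length := by rw [isPathList_length hp]; omega
  have hfil : t.filter (fun w => NonDisc G t w) =
      {l[0]'(by omega), l[l.length - 1]'(by omega)} := by
    ext w
    simp only [Finset.mem_filter, Finset.mem_insert, Finset.mem_singleton]
    constructor
    · rintro ⟨hw, hnd⟩
      exact (path_nonDisc_iff hp h2 w hw).mp ⟨hw, hnd.2⟩
    · rintro (rfl | rfl)
      · have hm : l[0]'(by omega) ∈ t := (isPathList_mem hp).mpr (List.getElem_mem _)
        exact ⟨hm, (path_nonDisc_iff hp h2 _ hm).mpr (Or.inl rfl)⟩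
      · have hm : l[l.length-1]'(by omega) ∈ t := (isPathList_mem hp).mpr (List.getElem_mem _)
        exact ⟨hm, (path_nonDisc_iff hp h2 _ hm).mpr (Or.inr rfl)⟩
    
  rw [ndCount, hfil]
  rw [Finset.card_insert_of_notMem, Finset.card_singleton]
  simp only [Finset.mem_singleton]
  intro h
  have := hp.1.getElem_inj_iff.mp h
  omega

lemma consec_pair {a b u w : V} : Consec [a, b] u w ↔ u = a ∧ w = b := by
  constructor
  · rintro ⟨k, h1, h2⟩
    match k with
    | 0 => simp_all
    | 1 => simp at h2
    | (n+2) => simp at h2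
  · rintro ⟨rfl, rfl⟩
    exact ⟨0, by simp, by simp⟩

lemma isPathList_pair {G : SimpleGraph V} {a b : V} (hne : a ≠ b) (hadj : G.Adj a b) :
    IsPathList G {a, b} [a, b] := by
  refine ⟨by simp [hne], by simp, ?_⟩
  intro u hu w hw
  simp only [Finset.mem_insert, Finset.mem_singleton] at hu hw
  rw [consec_pair, consec_pair]
  rcases hu with rfl | rfl <;> rcases hw with rfl | rfl
  · simp [hne]
  · simp [hne, hadj]
  · simp [hne.symm, hadj.symm, hne]
  · simp [hne.symm]

lemma isPathList_singleton (G : SimpleGraph V) (v : V) : IsPathList G {v} [v] := by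
  refine ⟨by simp, by simp, ?_⟩
  intro u hu w hw
  simp only [Finset.mem_singleton] at hu hw
  subst hu; subst hw
  simp only [SimpleGraph.irrefl, false_iff]
  rintro (⟨k, h1, h2⟩ | ⟨k, h1, h2⟩) <;>
  · match k with
    | 0 => simp at h2
    | (n+1) => simp at h1

lemma path_erase_head_tube {G : SimpleGraph V} {s : Finset V} {l : List V}
    (hp : IsPathList G s l) (hl2 : 2 ≤ l.length) :
    IsTube G (s.erase (l[0]'(by omega))) := by
  obtain ⟨hd, tl, rfl⟩ := List.exists_cons_of_ne_nil
    (by intro h; rw [h] at hl2; simp at hl2 : l ≠ [])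
  have htl : IsPathList G (s.erase hd) tl := isPathList_erase_head hp
  have htlne : tl ≠ [] := by intro h; rw [h] at hl2; simp at hl2
  simpa using isPathList_tube htl htlne

lemma main_path_or_three {G : SimpleGraph V} :
    ∀ n (t : Finset V), t.card = n → IsTube G t → 2 ≤ t.card →
      (∃ l, IsPathList G t l) ∨ 3 ≤ ndCount G t := by
  intro n
  induction n using Nat.strong_induction_on with
  | _ n ih =>
  intro t hn ht h2
  obtain ⟨a, hat, hstube⟩ := exists_nonDisc ht h2
  have hts : t = insert a (t.erase a) := (Finset.insert_erase hat).symm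
  set s := t.erase a with hs
  have has : a ∉ s := Finset.notMem_erase a t
  have hscard : s.card = t.card - 1 := Finset.card_erase_of_mem hat
  by_cases hc2 : t.card = 2
  · -- base case: two vertices
    left
    obtain ⟨x, y, hxy, hxyt⟩ := Finset.card_eq_two.mp hc2
    have hx : x ∈ t := by rw [hxyt]; simp
    have hy : y ∈ t := by rw [hxyt]; simp
    obtain ⟨u, z, hut, hus, hzs, hadj⟩ := crossing ht (Finset.singleton_subset_iff.mpr hx)
      ⟨x, Finset.mem_singleton_self x⟩
      (fun hsub => hxy (Finset.mem_singleton.mp (hsub hy)).symm)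
    have hz : z = x := Finset.mem_singleton.mp hzs
    have hu : u = y := by
      rw [hxyt] at hut
      rcases Finset.mem_insert.mp hut with rfl | h
      · exact absurd (Finset.mem_singleton_self u) hus
      · exact Finset.mem_singleton.mp h
    rw [hu, hz] at hadj
    exact ⟨[x, y], hxyt ▸ isPathList_pair hxy hadj.symm⟩
  · -- t.card ≥ 3
    have h3 : 3 ≤ t.card := by omega
    have hscard2 : 2 ≤ s.card := by omega
    -- a has a neighbor x0 in s
    obtain ⟨u, x0, hut, hus, hx0s, hadjux0⟩ := crossing ht (Finset.erase_subset a t)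
      (Finset.card_pos.mp (by rw [← hs]; omega)) (fun hsub => has (hsub hat))
    have hua : u = a := by
      by_contra hne
      exact hus (Finset.mem_erase.mpr ⟨hne, hut⟩)
    subst hua
    have hadjax0 : G.Adj u x0 := hadjux0
    rcases ih s.card (by omega) s rfl hstube hscard2 with ⟨l, hp⟩ | hnd3
    · -- s is a path
      have hllen : l.length = s.card := isPathList_length hp
      have hl2 : 2 ≤ l.length := by omega
      have hlne : l ≠ [] := by intro h; rw [h] at hllen; simp at hllen; omega
      have hl0 : 0 < l.length := by omega
      set e0 := l[0]'hl0 with he0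
      set e1 := l[l.length - 1]'(by omega) with he1
      have he0s : e0 ∈ s := (isPathList_mem hp).mpr (List.getElem_mem _)
      have he1s : e1 ∈ s := (isPathList_mem hp).mpr (List.getElem_mem _)
      have he01 : e0 ≠ e1 := by
        intro h
        have := hp.1.getElem_inj_iff.mp h
        omega
      have hae0 : u ≠ e0 := fun h => has (h ▸ he0s)
      have hae1 : u ≠ e1 := fun h => has (h ▸ he1s)
      -- reverse path
      have hp' : IsPathList G s l.reverse := isPathList_reverse hp
      have hrev0 : l.reverse[0]'(by simp; omega) = e1 := by
        rw [List.getElem_reverse]; simp [he1]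
      by_cases hP0 : ∀ x ∈ s, G.Adj u x → x = e0
      · left
        refine ⟨u :: l, ?_⟩
        rw [hts]
        refine isPathList_cons hp hlne has ?_ hP0
        show G.Adj u e0
        rw [← hP0 x0 hx0s hadjax0]
        exact hadjax0
      · by_cases hP1 : ∀ x ∈ s, G.Adj u x → x = e1
        · left
          refine ⟨u :: l.reverse, ?_⟩
          rw [hts]
          have hrne : l.reverse ≠ [] := by simpa using hlne
          have hP1' : ∀ x ∈ s, G.Adj u x → x = l.reverse[0]'(List.length_pos_iff.mpr hrne) := by
            intro x hx hadj
            rw [hrev0]; exact hP1 x hx hadj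
          refine isPathList_cons hp' hrne has ?_ hP1'
          show G.Adj u (l.reverse[0]'(List.length_pos_iff.mpr hrne))
          rw [hrev0, ← hP1 x0 hx0s hadjax0]
          exact hadjax0
        · right
          push_neg at hP0 hP1
          obtain ⟨y0, hy0s, hy0adj, hy0ne⟩ := hP0
          obtain ⟨y1, hy1s, hy1adj, hy1ne⟩ := hP1
          -- a, e0, e1 are all non-disconnecting in t
          have hnda : NonDisc G t u := ⟨hat, Or.inr hstube⟩
          have hnde0 : NonDisc G t e0 := by
            refine ⟨Finset.mem_of_mem_erase he0s, Or.inr ?_⟩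
            have : t.erase e0 = insert u (s.erase e0) := by
              conv_lhs => rw [hts]
              exact Finset.erase_insert_of_ne hae0
            rw [this]
            exact insert_tube (path_erase_head_tube hp hl2)
              (Finset.mem_erase.mpr ⟨hy0ne, hy0s⟩) hy0adj
          have hnde1 : NonDisc G t e1 := by
            refine ⟨Finset.mem_of_mem_erase he1s, Or.inr ?_⟩
            have : t.erase e1 = insert u (s.erase e1) := by
              conv_lhs => rw [hts]
              exact Finset.erase_insert_of_ne hae1
            rw [this]
            have := path_erase_head_tube hp' (by simpa using hl2)
            rw [hrev0] at this
            exact insert_tube this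
              (Finset.mem_erase.mpr ⟨hy1ne, hy1s⟩) hy1adj
          have hsub : ({u, e0, e1} : Finset V) ⊆ t.filter (fun w => NonDisc G t w) := by
            intro z hz
            simp only [Finset.mem_insert, Finset.mem_singleton] at hz
            rcases hz with rfl | rfl | rfl
            · exact Finset.mem_filter.mpr ⟨hat, hnda⟩
            · exact Finset.mem_filter.mpr ⟨Finset.mem_of_mem_erase he0s, hnde0⟩
            · exact Finset.mem_filter.mpr ⟨Finset.mem_of_mem_erase he1s, hnde1⟩
          have hcard3 : ({u, e0, e1} : Finset V).card = 3 :=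
            Finset.card_eq_three.mpr ⟨u, e0, e1, hae0, hae1, he01, rfl⟩
          calc 3 = ({u, e0, e1} : Finset V).card := hcard3.symm
            _ ≤ _ := Finset.card_le_card hsub
    · -- s has ≥ 3 non-disconnecting vertices
      right
      have hsub : insert u ((s.filter (fun w => NonDisc G s w)).erase x0) ⊆
          t.filter (fun w => NonDisc G t w) := by
        intro z hz
        rcases Finset.mem_insert.mp hz with rfl | hz
        · exact Finset.mem_filter.mpr ⟨hat, ⟨hat, Or.inr hstube⟩⟩
        · obtain ⟨hzx0, hzf⟩ := Finset.mem_erase.mp hz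
          obtain ⟨hzs, hznd⟩ := Finset.mem_filter.mp hzf
          have hzt : z ∈ t := Finset.mem_of_mem_erase hzs
          refine Finset.mem_filter.mpr ⟨hzt, hzt, Or.inr ?_⟩
          have herasecard : 0 < (s.erase z).card := by
            rw [Finset.card_erase_of_mem hzs]; omega
          have hsz : IsTube G (s.erase z) := by
            rcases hznd.2 with h | h
            · rw [h] at herasecard; simp at herasecard
            · exact h
          have hza : z ≠ u := fun h => has (h ▸ hzs)
          have : t.erase z = insert u (s.erase z) := by
            conv_lhs => rw [hts]
            exact Finset.erase_insert_of_ne hza.symm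
          rw [this]
          exact insert_tube hsz (Finset.mem_erase.mpr ⟨fun h => hzx0 h.symm, hx0s⟩) hadjax0
      have hnotmem : u ∉ (s.filter (fun w => NonDisc G s w)).erase x0 := by
        intro h
        exact has (Finset.mem_of_mem_filter _ (Finset.mem_of_mem_erase h))
      calc 3 ≤ ((s.filter (fun w => NonDisc G s w)).erase x0).card + 1 := by
              have h1 := Finset.pred_card_le_card_erase (s := s.filter (fun w => NonDisc G s w)) (a := x0)
              have h2' : 3 ≤ (s.filter (fun w => NonDisc G s w)).card := hnd3
              omega
        _ = (insert u ((s.filter (fun w => NonDisc G s w)).erase x0)).card :=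
              (Finset.card_insert_of_notMem hnotmem).symm
        _ ≤ _ := Finset.card_le_card hsub

lemma isPathList_erase_head' {G : SimpleGraph V} {K : Finset V} {l : List V}
    (hp : IsPathList G K l) (hl : 0 < l.length) :
    IsPathList G (K.erase (l[0]'hl)) l.tail := by
  obtain ⟨hd, tl, rfl⟩ := List.exists_cons_of_ne_nil
    (by intro h; rw [h] at hl; simp at hl : l ≠ [])
  simpa using isPathList_erase_head hp

lemma subtube_path {G : SimpleGraph V} :
    ∀ n (K : Finset V), K.card = n → ∀ l, IsPathList G K l →
      ∀ s, IsTube G s → s ⊆ K → ∃ l', IsPathList G s l' := by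
  intro n
  induction n using Nat.strong_induction_on with
  | _ n ih =>
  intro K hn l hp s hst hsK
  by_cases heq : s = K
  · exact ⟨l, heq ▸ hp⟩
  have hlt : s.card < K.card := Finset.card_lt_card (Finset.ssubset_iff_subset_ne.mpr ⟨hsK, heq⟩)
  have hscard : 1 ≤ s.card := Finset.card_pos.mpr hst.1
  have hK2 : 2 ≤ K.card := by omega
  have hllen : l.length = K.card := isPathList_length hp
  have hl2 : 2 ≤ l.length := by omega
  have hl0 : 0 < l.length := by omega
  by_cases he0 : l[0]'hl0 ∈ s
  · by_cases he1 : l[l.length - 1]'(by omega) ∈ s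
    · -- contradiction via some w ∈ K \ s
      exfalso
      obtain ⟨w, hwK, hws⟩ := Finset.exists_of_ssubset (Finset.ssubset_iff_subset_ne.mpr ⟨hsK, heq⟩)
      obtain ⟨m, hm, hmw⟩ := List.mem_iff_getElem.mp ((isPathList_mem hp).mp hwK)
      have hm0 : m ≠ 0 := by
        rintro rfl
        exact hws (hmw ▸ he0)
      have hmlast : m ≠ l.length - 1 := by
        rintro rfl
        exact hws (hmw ▸ he1)
      have hreach : ReachIn G s (l[0]'hl0) (l[l.length - 1]'(by omega)) :=
        (isTube_iff.mp hst).2 _ he0 _ he1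
      have := reach_stay_lt hp hsK hm (by rw [hmw]; exact hws) he0 hreach hl0 rfl
        (by omega) (l.length - 1) (by omega) rfl
      omega
    · -- last endpoint not in s
      have hp' := isPathList_reverse hp
      have hrl0 : 0 < l.reverse.length := by simpa using hl0
      have hrev0 : l.reverse[0]'hrl0 = l[l.length - 1]'(by omega) := by
        rw [List.getElem_reverse]; simp
      have htail := isPathList_erase_head' hp' hrl0
      refine ih (K.card - 1) (by omega) _ ?_ _ htail s hst ?_
      · rw [Finset.card_erase_of_mem]
        rw [hrev0]
        exact (isPathList_mem hp).mpr (List.getElem_mem _)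
      · intro z hz
        refine Finset.mem_erase.mpr ⟨?_, hsK hz⟩
        intro hc
        rw [hrev0] at hc
        exact he1 (hc ▸ hz)
  · -- first endpoint not in s
    have htail := isPathList_erase_head' hp hl0
    refine ih (K.card - 1) (by omega) _ ?_ _ htail s hst ?_
    · rw [Finset.card_erase_of_mem]
      exact (isPathList_mem hp).mpr (List.getElem_mem _)
    · intro z hz
      refine Finset.mem_erase.mpr ⟨?_, hsK hz⟩
      intro hc
      exact he0 (hc ▸ hz)

lemma mem_tubes {G : SimpleGraph V} {t : Finset V} : t ∈ tubes G ↔ IsTube G t := by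
  simp [tubes]

lemma part1 {G : SimpleGraph V} {t : Finset V} (ht : IsTube G t) (h2 : 2 ≤ t.card) :
    2 ≤ ndCount G t ∧ (ndCount G t = 2 ↔ InducedIsPath G t) := by
  rcases main_path_or_three t.card t rfl ht h2 with ⟨l, hp⟩ | hnd3
  · have := ndCount_path hp h2
    exact ⟨by omega, by rw [this]; simp only [true_iff]; exact ⟨l, hp⟩⟩
  · refine ⟨by omega, ?_, ?_⟩
    · intro h; omega
    · rintro ⟨l, hp⟩
      have := ndCount_path hp h2
      omega

lemma ndCount_singleton (G : SimpleGraph V) (v : V) : ndCount G {v} = 1 := by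
  have : ({v} : Finset V).filter (fun w => NonDisc G {v} w) = {v} := by
    ext w
    simp only [Finset.mem_filter, Finset.mem_singleton]
    constructor
    · rintro ⟨h, _⟩; exact h
    · rintro rfl
      exact ⟨rfl, Finset.mem_singleton_self _, Or.inl (by simp)⟩
  rw [ndCount, this, Finset.card_singleton]

lemma small_tubes_eq {G : SimpleGraph V} :
    (tubes G).filter (fun t => ¬ 2 ≤ t.card) = Finset.univ.image (fun v => ({v} : Finset V)) := by
  ext t
  simp only [Finset.mem_filter, Finset.mem_image, Finset.mem_univ, true_and]
  constructor
  · rintro ⟨ht, hc⟩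
    have ht' := mem_tubes.mp ht
    have h1 : t.card = 1 := by
      have := Finset.card_pos.mpr ht'.1
      omega
    obtain ⟨v, hv⟩ := Finset.card_eq_one.mp h1
    exact ⟨v, hv.symm⟩
  · rintro ⟨v, rfl⟩
    refine ⟨mem_tubes.mpr (singleton_tube G v), by simp⟩

lemma duop_iff {G : SimpleGraph V} :
    DisjointUnionOfPaths G ↔ ∀ t ∈ (tubes G).filter (fun t => 2 ≤ t.card), InducedIsPath G t := by
  constructor
  · intro hd t htmem
    obtain ⟨htube, hc⟩ := Finset.mem_filter.mp htmem
    have htube' := mem_tubes.mp htube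
    -- maximal supertube
    have hSne : ((tubes G).filter (fun K => t ⊆ K)).Nonempty := ⟨t, Finset.mem_filter.mpr ⟨htube, Finset.Subset.refl t⟩⟩
    obtain ⟨K, hKS, hmax⟩ := ((tubes G).filter (fun K => t ⊆ K)).exists_max_image Finset.card hSne
    obtain ⟨hKt, htK⟩ := Finset.mem_filter.mp hKS
    have hKtube := mem_tubes.mp hKt
    have hKmax : ∀ C : Finset V, IsTube G C → K ⊆ C → K = C := by
      intro C hC hKC
      refine Finset.eq_of_subset_of_card_le hKC ?_
      exact hmax C (Finset.mem_filter.mpr ⟨mem_tubes.mpr hC, htK.trans hKC⟩)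
    obtain ⟨l, hp⟩ := hd K hKtube hKmax
    exact subtube_path K.card K rfl l hp t htube' htK
  · intro hall K hK hKmax
    by_cases hc : 2 ≤ K.card
    · exact hall K (Finset.mem_filter.mpr ⟨mem_tubes.mpr hK, hc⟩)
    · have h1 : K.card = 1 := by
        have := Finset.card_pos.mpr hK.1
        omega
      obtain ⟨v, rfl⟩ := Finset.card_eq_one.mp h1
      exact ⟨[v], isPathList_singleton G v⟩

lemma sum_assembly {G : SimpleGraph V} :
    (∑ t ∈ tubes G, Nat.choose (ndCount G t) 2 =
      ∑ t ∈ (tubes G).filter (fun t => 2 ≤ t.card), Nat.choose (ndCount G t) 2) ∧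
    ((tubes G).card - Fintype.card V = ((tubes G).filter (fun t => 2 ≤ t.card)).card) := by
  classical
  have hsplit := Finset.sum_filter_add_sum_filter_not (tubes G) (fun t => 2 ≤ t.card)
    (fun t => Nat.choose (ndCount G t) 2)
  have hzero : ∑ t ∈ (tubes G).filter (fun t => ¬ 2 ≤ t.card), Nat.choose (ndCount G t) 2 = 0 := by
    refine Finset.sum_eq_zero ?_
    intro t ht
    rw [small_tubes_eq] at ht
    obtain ⟨v, _, rfl⟩ := Finset.mem_image.mp ht
    rw [ndCount_singleton]
    rfl
  have hcardA : ((tubes G).filter (fun t => ¬ 2 ≤ t.card)).card = Fintype.card V := by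
    rw [small_tubes_eq, Finset.card_image_of_injective _ Finset.singleton_injective]
    simp
  have hcardsplit := Finset.card_filter_add_card_filter_not
    (s := tubes G) (p := fun t => 2 ≤ t.card)
  constructor
  · omega
  · omega

lemma choose_facts {n : ℕ} (h2 : 2 ≤ n) : (Nat.choose n 2 = 1 ↔ n = 2) ∧ 1 ≤ Nat.choose n 2 := by
  constructor
  · constructor
    · intro h
      by_contra hne
      have h3 : 3 ≤ n := by omega
      have := Nat.choose_le_choose 2 h3
      simp [Nat.choose] at this ⊢
      omega
    · rintro rfl; rfl
  · have := Nat.choose_le_choose 2 h2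
    simpa using this

end Aux

theorem stmt19 (G : SimpleGraph V) :
    (∀ t : Finset V, IsTube G t → 2 ≤ t.card →
      2 ≤ ndCount G t ∧ (ndCount G t = 2 ↔ InducedIsPath G t)) ∧
    ((∑ t ∈ tubes G, Nat.choose (ndCount G t) 2 = (tubes G).card - Fintype.card V) ↔
      DisjointUnionOfPaths G) ∧
    (¬ DisjointUnionOfPaths G →
      (tubes G).card - Fintype.card V < ∑ t ∈ tubes G, Nat.choose (ndCount G t) 2) := by
  classical
  obtain ⟨hsum, hcard⟩ := sum_assembly (G := G)
  set B := (tubes G).filter (fun t => 2 ≤ t.card) with hB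
  have hBfacts : ∀ t ∈ B, 2 ≤ ndCount G t ∧ (ndCount G t = 2 ↔ InducedIsPath G t) := by
    intro t ht
    obtain ⟨ht1, ht2⟩ := Finset.mem_filter.mp ht
    exact part1 (mem_tubes.mp ht1) ht2
  have hle : ∀ t ∈ B, 1 ≤ Nat.choose (ndCount G t) 2 := fun t ht =>
    (choose_facts (hBfacts t ht).1).2
  have hsum1 : ∑ t ∈ B, (1 : ℕ) = B.card := by simp
  have keyiff : (∑ t ∈ B, Nat.choose (ndCount G t) 2 = B.card) ↔
      ∀ t ∈ B, InducedIsPath G t := by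
    rw [← hsum1]
    rw [eq_comm]
    rw [Finset.sum_eq_sum_iff_of_le hle]
    constructor
    · intro h t ht
      have h1 := (h t ht).symm
      have := (choose_facts (hBfacts t ht).1).1.mp h1
      exact ((hBfacts t ht).2).mp this
    · intro h t ht
      have hnd2 := ((hBfacts t ht).2).mpr (h t ht)
      rw [hnd2]
      rfl
  refine ⟨fun t ht h2 => part1 ht h2, ?_, ?_⟩
  · rw [hsum, hcard, keyiff, duop_iff]
  · intro hnd
    rw [duop_iff] at hnd
    push_neg at hnd
    obtain ⟨t0, ht0B, ht0np⟩ := hnd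
    have hnd3 : 3 ≤ ndCount G t0 := by
      have := hBfacts t0 ht0B
      rcases Nat.lt_or_ge (ndCount G t0) 3 with h | h
      · have : ndCount G t0 = 2 := by omega
        exact absurd (((hBfacts t0 ht0B).2).mp this) ht0np
      · exact h
    have hstrict : ∑ t ∈ B, (1 : ℕ) < ∑ t ∈ B, Nat.choose (ndCount G t) 2 := by
      refine Finset.sum_lt_sum hle ⟨t0, ht0B, ?_⟩
      have := Nat.choose_le_choose 2 hnd3
      simp [Nat.choose] at this
      omega
    rw [hsum, hcard]
    omega
end
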